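/- arXiv:1312.7039 — 4 statements merged into one kernel-verified Lean document; each statement's English description precedes it below -/
import Mathlib

section
/- (Claim 1b.) In the noise-free setting under Assumption 1, let A ⊆ A† satisfy J_{λ,3} ⊆ A, let d ∈ ℝ^p have |d_i| = λ for all i ∈ A, let x ∈ ℝ^p be given by x_i = 0 for i ∉ A and x_A = (Ψ_AᵗΨ_A)⁻¹(Ψ_Aᵗ y − d_A), set d_i = Ψ_iᵗ(y − Ψ_A x_A) for i ∉ A, and define A' = {i : |x_i + d_i| > λ}. Then either J_{λ,2} ⊆ A, or max{|x†_i| : i ∉ A'} < max{|x†_i| : i ∉ A}. -/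
open Matrix

/-- The submatrix `Ψ_A` of `Ψ` consisting of the columns indexed by `A`. -/
def colSub {n p : ℕ} (Ψ : Matrix (Fin n) (Fin p) ℝ) (A : Finset (Fin p)) :
    Matrix (Fin n) {i // i ∈ A} ℝ :=
  Matrix.of fun i j => Ψ i j.1

/-- `Ψ` satisfies the restricted isometry property of order `k` with constant `δ`:
`(1 − δ)‖x‖₂² ≤ ‖Ψx‖₂² ≤ (1 + δ)‖x‖₂²` for all `x` with at most `k` nonzero entries. -/
def HasRIP {n p : ℕ} (Ψ : Matrix (Fin n) (Fin p) ℝ) (k : ℕ) (δ : ℝ) : Prop :=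
  ∀ x : Fin p → ℝ, (Finset.univ.filter (fun i => x i ≠ 0)).card ≤ k →
    (1 - δ) * (∑ i, x i ^ 2) ≤ ∑ j, (Ψ *ᵥ x) j ^ 2 ∧
      ∑ j, (Ψ *ᵥ x) j ^ 2 ≤ (1 + δ) * (∑ i, x i ^ 2)

open Finset

namespace StmtAux

lemma cs_sum {α : Type*} [Fintype α] (f g : α → ℝ) :
    ∑ i, f i * g i ≤ Real.sqrt (∑ i, f i ^ 2) * Real.sqrt (∑ i, g i ^ 2) := by
  have h := Finset.sum_mul_sq_le_sq_mul_sq univ f g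
  calc ∑ i, f i * g i ≤ |∑ i, f i * g i| := le_abs_self _
    _ = Real.sqrt ((∑ i, f i * g i) ^ 2) := (Real.sqrt_sq_eq_abs _).symm
    _ ≤ Real.sqrt ((∑ i, f i ^ 2) * ∑ i, g i ^ 2) := Real.sqrt_le_sqrt h
    _ = _ := Real.sqrt_mul (Finset.sum_nonneg fun i _ => sq_nonneg _) _

lemma sum_swap_mul {n p : ℕ} (Ψ : Matrix (Fin n) (Fin p) ℝ) (v : Fin p → ℝ) (w : Fin n → ℝ) :
    ∑ j, (Ψ *ᵥ v) j * w j = ∑ i, v i * (∑ j, Ψ j i * w j) := by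
  simp only [mulVec, dotProduct, Finset.sum_mul]
  rw [Finset.sum_comm]
  exact sum_congr rfl fun i _ => by
    rw [Finset.mul_sum]; exact sum_congr rfl fun j _ => by ring

lemma mulVec_comb {n p : ℕ} (Ψ : Matrix (Fin n) (Fin p) ℝ) (a b : ℝ) (u v : Fin p → ℝ) (j : Fin n) :
    (Ψ *ᵥ (fun i => a * u i + b * v i)) j = a * (Ψ *ᵥ u) j + b * (Ψ *ᵥ v) j := by
  simp only [mulVec, dotProduct, Finset.mul_sum, ← Finset.sum_add_distrib]
  exact Finset.sum_congr rfl fun i _ => by ring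

lemma ro {n p k : ℕ} {Ψ : Matrix (Fin n) (Fin p) ℝ} {δ : ℝ}
    (hRIP : HasRIP Ψ k δ) (u v : Fin p → ℝ)
    (hdisj : ∀ i, u i = 0 ∨ v i = 0)
    (hcard : (Finset.univ.filter (fun i => u i ≠ 0 ∨ v i ≠ 0)).card ≤ k) :
    |∑ j, (Ψ *ᵥ u) j * (Ψ *ᵥ v) j| ≤
      δ * Real.sqrt (∑ i, u i ^ 2) * Real.sqrt (∑ i, v i ^ 2) := by
  have hsu : (0:ℝ) ≤ ∑ i, u i ^ 2 := Finset.sum_nonneg fun i _ => sq_nonneg _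
  have hsv : (0:ℝ) ≤ ∑ i, v i ^ 2 := Finset.sum_nonneg fun i _ => sq_nonneg _
  set U := Real.sqrt (∑ i, u i ^ 2) with hU
  set V := Real.sqrt (∑ i, v i ^ 2) with hV
  have hU0 : 0 ≤ U := Real.sqrt_nonneg _
  have hV0 : 0 ≤ V := Real.sqrt_nonneg _
  have hU2 : U ^ 2 = ∑ i, u i ^ 2 := Real.sq_sqrt hsu
  have hV2 : V ^ 2 = ∑ i, v i ^ 2 := Real.sq_sqrt hsv
  by_cases hUz : U = 0
  · have : ∀ i, u i = 0 := by
      intro i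
      have h0 : (∑ i, u i ^ 2) = 0 := by rw [← hU2, hUz]; ring
      have := (Finset.sum_eq_zero_iff_of_nonneg (fun i _ => sq_nonneg (u i))).1 h0 i (mem_univ i)
      exact pow_eq_zero_iff (by norm_num) |>.1 this
    have hz : ∀ j, (Ψ *ᵥ u) j = 0 := by
      intro j; simp [mulVec, dotProduct, this]
    simp [hz, hUz]
  by_cases hVz : V = 0
  · have : ∀ i, v i = 0 := by
      intro i
      have h0 : (∑ i, v i ^ 2) = 0 := by rw [← hV2, hVz]; ring
      have := (Finset.sum_eq_zero_iff_of_nonneg (fun i _ => sq_nonneg (v i))).1 h0 i (mem_univ i)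
      exact pow_eq_zero_iff (by norm_num) |>.1 this
    have hz : ∀ j, (Ψ *ᵥ v) j = 0 := by
      intro j; simp [mulVec, dotProduct, this]
    simp [hz, hVz]
  have hUpos : 0 < U := lt_of_le_of_ne hU0 (Ne.symm hUz)
  have hVpos : 0 < V := lt_of_le_of_ne hV0 (Ne.symm hVz)
  set wp : Fin p → ℝ := fun i => V * u i + U * v i with hwp
  set wm : Fin p → ℝ := fun i => V * u i + (-U) * v i with hwm
  have hcross : ∑ i, u i * v i = 0 :=
    Finset.sum_eq_zero fun i _ => by rcases hdisj i with h | h <;> simp [h]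
  have hsupp : ∀ w : Fin p → ℝ, (∀ i, u i = 0 → v i = 0 → w i = 0) →
      (Finset.univ.filter (fun i => w i ≠ 0)).card ≤ k := by
    intro w hw
    refine le_trans (Finset.card_le_card ?_) hcard
    intro i hi
    simp only [mem_filter, mem_univ, true_and] at hi ⊢
    by_contra hcon
    push_neg at hcon
    exact hi (hw i hcon.1 hcon.2)
  have hwp_supp := hsupp wp (fun i h1 h2 => by simp [hwp, h1, h2])
  have hwm_supp := hsupp wm (fun i h1 h2 => by simp [hwm, h1, h2])
  have hwp_sq : ∑ i, wp i ^ 2 = 2 * (U ^ 2 * V ^ 2) := by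
    have : ∀ i, wp i ^ 2 = V^2 * u i ^2 + U^2 * v i^2 + (2*U*V) * (u i * v i) := by
      intro i; simp only [hwp]; ring
    simp only [this, Finset.sum_add_distrib, ← Finset.mul_sum, hcross, hU2, hV2]
    ring
  have hwm_sq : ∑ i, wm i ^ 2 = 2 * (U ^ 2 * V ^ 2) := by
    have : ∀ i, wm i ^ 2 = V^2 * u i ^2 + U^2 * v i^2 + (-(2*U*V)) * (u i * v i) := by
      intro i; simp only [hwm]; ring
    simp only [this, Finset.sum_add_distrib, ← Finset.mul_sum, hcross, hU2, hV2]
    ring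
  have hwp_mv : ∀ j, (Ψ *ᵥ wp) j = V * (Ψ *ᵥ u) j + U * (Ψ *ᵥ v) j :=
    fun j => mulVec_comb Ψ V U u v j
  have hwm_mv : ∀ j, (Ψ *ᵥ wm) j = V * (Ψ *ᵥ u) j + (-U) * (Ψ *ᵥ v) j :=
    fun j => mulVec_comb Ψ V (-U) u v j
  have hdiff : (∑ j, (Ψ *ᵥ wp) j ^ 2) - (∑ j, (Ψ *ᵥ wm) j ^ 2)
      = 4 * U * V * ∑ j, (Ψ *ᵥ u) j * (Ψ *ᵥ v) j := by
    rw [← Finset.sum_sub_distrib, Finset.mul_sum]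
    refine Finset.sum_congr rfl fun j _ => ?_
    rw [hwp_mv j, hwm_mv j]; ring
  obtain ⟨hp1, hp2⟩ := hRIP wp hwp_supp
  obtain ⟨hm1, hm2⟩ := hRIP wm hwm_supp
  rw [hwp_sq] at hp1 hp2
  rw [hwm_sq] at hm1 hm2
  set P := ∑ j, (Ψ *ᵥ u) j * (Ψ *ᵥ v) j
  have h4 : 4 * U * V * P ≤ 4 * δ * (U^2 * V^2) := by nlinarith [hdiff]
  have h5 : -(4 * δ * (U^2*V^2)) ≤ 4 * U * V * P := by nlinarith [hdiff]
  rw [abs_le]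
  constructor
  · rw [neg_le]
    nlinarith [mul_pos hUpos hVpos]
  · nlinarith [mul_pos hUpos hVpos]

lemma colSub_mulVec {n p : ℕ} (Ψ : Matrix (Fin n) (Fin p) ℝ) (A : Finset (Fin p))
    (x : Fin p → ℝ) (hxI : ∀ i ∉ A, x i = 0) :
    colSub Ψ A *ᵥ (fun j : {i // i ∈ A} => x j.1) = Ψ *ᵥ x := by
  funext j
  simp only [mulVec, dotProduct, colSub, of_apply]
  rw [Finset.sum_coe_sort A (fun i => Ψ j i * x i)]
  refine Finset.sum_subset (Finset.subset_univ A) ?_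
  intro i _ hi
  rw [hxI i hi, mul_zero]

lemma d_eq {n p : ℕ} (Ψ : Matrix (Fin n) (Fin p) ℝ) (A : Finset (Fin p))
    (y : Fin n → ℝ) (d x : Fin p → ℝ)
    (hpos : ∀ z : {i // i ∈ A} → ℝ, z ≠ 0 → 0 < ∑ j, (colSub Ψ A *ᵥ z) j ^ 2)
    (hxI : ∀ i ∉ A, x i = 0)
    (hxA : (fun j : {i // i ∈ A} => x j.1) =
      ((colSub Ψ A)ᵀ * colSub Ψ A)⁻¹ *ᵥ ((colSub Ψ A)ᵀ *ᵥ y - fun j => d j.1))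
    (hdI : ∀ i ∉ A, d i = (Ψᵀ *ᵥ (y - colSub Ψ A *ᵥ fun j => x j.1)) i) :
    ∀ i, d i = ∑ j, Ψ j i * (y j - (Ψ *ᵥ x) j) := by
  set S := colSub Ψ A with hS
  set xs : {i // i ∈ A} → ℝ := fun j => x j.1 with hxs
  have hSx : S *ᵥ xs = Ψ *ᵥ x := colSub_mulVec Ψ A x hxI
  have hG : (Sᵀ * S).PosDef := by
    refine Matrix.PosDef.of_dotProduct_mulVec_pos (by simp [IsHermitian, Matrix.transpose_mul]) fun z hz => ?_
    have h1 : star z ⬝ᵥ ((Sᵀ * S) *ᵥ z) = ∑ j, (S *ᵥ z) j ^ 2 := by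
      rw [← mulVec_mulVec, star_trivial, dotProduct_mulVec, vecMul_transpose]
      simp [dotProduct, sq]
    rw [h1]
    exact hpos z hz
  have hdet : IsUnit (Sᵀ * S).det := hG.det_pos.ne'.isUnit
  have hnormal : (Sᵀ * S) *ᵥ xs = Sᵀ *ᵥ y - fun j => d j.1 := by
    rw [hxA, mulVec_mulVec, Matrix.mul_nonsing_inv _ hdet, one_mulVec]
  have hres : Sᵀ *ᵥ (fun j => y j - (Ψ *ᵥ x) j) = fun j : {i // i ∈ A} => d j.1 := by
    have : (fun j => y j - (Ψ *ᵥ x) j) = y - S *ᵥ xs := by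
      funext j; simp [hSx]
    rw [this, mulVec_sub, mulVec_mulVec, hnormal]
    simp
  intro i
  by_cases hi : i ∈ A
  · have := congrFun hres ⟨i, hi⟩
    rw [← this]
    simp only [hS, colSub, of_apply, mulVec, dotProduct, transpose_apply]
  · rw [hdI i hi]
    have : y - S *ᵥ xs = fun j => y j - (Ψ *ᵥ x) j := by
      funext j; simp [hSx]
    rw [this]
    simp only [mulVec, dotProduct, transpose_apply]

end StmtAux

set_option maxHeartbeats 2000000 in
/-- Claim 1b: if `J_{λ,3} ⊆ A ⊆ A†`, then either `J_{λ,2} ⊆ A`, or the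
maximal value of `|x†_i|` outside the next active set `A'` is strictly smaller than the
maximal value of `|x†_i|` outside `A` (maxima taken in `ℝ≥0`, with the empty maximum `0`). -/
theorem stmt_15 {n p : ℕ} (Ψ : Matrix (Fin n) (Fin p) ℝ)
    (xdag : Fin p → ℝ) (Adag : Finset (Fin p))
    (hAdag : Adag = Finset.univ.filter (fun i => xdag i ≠ 0))
    (T : ℕ) (hT : T = Adag.card)
    (y : Fin n → ℝ) (hy : y = Ψ *ᵥ xdag)
    (δ : ℝ) (hδ0 : 0 < δ) (hδ1 : δ < 1)
    (hRIP : HasRIP Ψ (T + 1) δ)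
    (hAss1 : δ ≤ 1 / (4 * Real.sqrt T + 1))
    (lam : ℝ) (hlam : 0 < lam)
    (A : Finset (Fin p)) (hA : A ⊆ Adag)
    (hJ3 : Finset.univ.filter (fun i => 3 * lam ≤ |xdag i|) ⊆ A)
    (d x : Fin p → ℝ)
    (hdA : ∀ i ∈ A, |d i| = lam)
    (hxI : ∀ i ∉ A, x i = 0)
    (hxA : (fun j : {i // i ∈ A} => x j.1) =
      ((colSub Ψ A)ᵀ * colSub Ψ A)⁻¹ *ᵥ ((colSub Ψ A)ᵀ *ᵥ y - fun j => d j.1))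
    (hdI : ∀ i ∉ A, d i = (Ψᵀ *ᵥ (y - colSub Ψ A *ᵥ fun j => x j.1)) i)
 :
    Finset.univ.filter (fun i => 2 * lam ≤ |xdag i|) ⊆ A ∨
      (Finset.univ.filter (fun i => lam < |x i + d i|))ᶜ.sup (fun i => Real.nnabs (xdag i)) <
        Aᶜ.sup (fun i => Real.nnabs (xdag i)) := by
  classical
  by_cases hJ2 : Finset.univ.filter (fun i => 2 * lam ≤ |xdag i|) ⊆ A
  · exact Or.inl hJ2
  right
  obtain ⟨i₀, hi₀mem, hi₀A⟩ := Finset.not_subset.1 hJ2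
  have hi₀2 : 2 * lam ≤ |xdag i₀| := (mem_filter.1 hi₀mem).2
  have hi₀dag : i₀ ∈ Adag := by
    rw [hAdag, mem_filter]
    refine ⟨mem_univ _, fun h => ?_⟩
    rw [h, abs_zero] at hi₀2; linarith
  -- numeric setup
  set s := Real.sqrt T with hsdef
  have hs0 : 0 ≤ s := Real.sqrt_nonneg _
  have hs2T : s ^ 2 = (T : ℝ) := Real.sq_sqrt (Nat.cast_nonneg T)
  have hT1 : (1 : ℝ) ≤ (T : ℝ) := by
    have : 1 ≤ Adag.card := Finset.card_pos.2 ⟨i₀, hi₀dag⟩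
    rw [hT]; exact_mod_cast this
  have hs1 : 1 ≤ s := by nlinarith
  have hδs : δ * (4 * s + 1) ≤ 1 := by
    have h1 : (0:ℝ) < 4 * s + 1 := by linarith
    calc δ * (4 * s + 1) ≤ (1 / (4 * s + 1)) * (4 * s + 1) :=
          mul_le_mul_of_nonneg_right hAss1 h1.le
      _ = 1 := by field_simp
  -- E and d
  set E : Fin p → ℝ := fun i => xdag i - x i with hE
  have hEsupp : ∀ i, E i ≠ 0 → i ∈ Adag := by
    intro i hi
    by_contra hcon
    have hx0 : x i = 0 := hxI i (fun h => hcon (hA h))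
    have hxd0 : xdag i = 0 := by
      by_contra h
      exact hcon (by rw [hAdag, mem_filter]; exact ⟨mem_univ _, h⟩)
    exact hi (by simp [hE, hx0, hxd0])
  have hpos : ∀ z : {i // i ∈ A} → ℝ, z ≠ 0 → 0 < ∑ j, (colSub Ψ A *ᵥ z) j ^ 2 := by
    intro z hz
    set extz : Fin p → ℝ := fun i => if h : i ∈ A then z ⟨i, h⟩ else 0 with hext
    have hoff : ∀ i ∉ A, extz i = 0 := fun i hi => dif_neg hi
    have hlam0 : (fun j : {i // i ∈ A} => extz j.1) = z := by
      funext j; exact dif_pos j.2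
    have hmv : colSub Ψ A *ᵥ z = Ψ *ᵥ extz := by
      rw [← hlam0]; exact StmtAux.colSub_mulVec Ψ A extz hoff
    have hsq : ∑ i, extz i ^ 2 = ∑ t : {i // i ∈ A}, z t ^ 2 := by
      conv_rhs => rw [← hlam0]
      rw [Finset.sum_coe_sort A (fun i => extz i ^ 2)]
      exact (Finset.sum_subset (Finset.subset_univ A)
        (fun i _ hi => by rw [hoff i hi]; ring)).symm
    have hcard : (univ.filter (fun i => extz i ≠ 0)).card ≤ T + 1 := by
      have hsub : (univ.filter (fun i => extz i ≠ 0)) ⊆ A := by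
        intro i hi
        by_contra hcon
        exact (mem_filter.1 hi).2 (hoff i hcon)
      have h1 : A.card ≤ Adag.card := Finset.card_le_card hA
      have := Finset.card_le_card hsub
      omega
    have hrip := (hRIP extz hcard).1
    have hzpos : 0 < ∑ t : {i // i ∈ A}, z t ^ 2 := by
      obtain ⟨t, ht⟩ := Function.ne_iff.1 hz
      have ht' : z t ≠ 0 := by simpa using ht
      have h1 : 0 < z t ^ 2 :=
        lt_of_le_of_ne (sq_nonneg _) (Ne.symm (pow_ne_zero 2 ht'))
      have h2 : z t ^ 2 ≤ ∑ x : {i // i ∈ A}, z x ^ 2 :=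
        Finset.single_le_sum (fun t _ => sq_nonneg (z t)) (mem_univ t)
      linarith
    rw [hmv]
    calc (0:ℝ) < (1 - δ) * ∑ i, extz i ^ 2 := by
          rw [hsq]; exact mul_pos (by linarith) hzpos
      _ ≤ _ := hrip
  have hd : ∀ i, d i = ∑ j, Ψ j i * (Ψ *ᵥ E) j := by
    have h0 := StmtAux.d_eq Ψ A y d x hpos hxI hxA hdI
    intro i
    rw [h0 i]
    refine Finset.sum_congr rfl fun j _ => ?_
    congr 1
    rw [hy]
    simp only [mulVec, dotProduct, hE, ← Finset.sum_sub_distrib]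
    exact Finset.sum_congr rfl fun t _ => by ring
  set SE := ∑ i, E i ^ 2 with hSE
  have hSEnn : 0 ≤ SE := Finset.sum_nonneg fun i _ => sq_nonneg _
  -- ####################### UPPER BOUND #######################
  have hUpper : SE ≤ lam ^ 2 * (10 * s ^ 2 + s / 2 + 5 / 8) := by
    set EA : Fin p → ℝ := fun i => if i ∈ A then E i else 0 with hEA
    set u : Fin p → ℝ := fun i => if i ∈ Adag \ A then xdag i else 0 with hu
    have hEAu : ∀ i, E i = EA i + u i := by
      intro i
      by_cases hiA : i ∈ A
      · have h2 : i ∉ Adag \ A := fun h => (Finset.mem_sdiff.1 h).2 hiA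
        simp [hEA, hu, hiA, h2]
      · by_cases hidag : i ∈ Adag
        · have hm : i ∈ Adag \ A := Finset.mem_sdiff.2 ⟨hidag, hiA⟩
          simp only [hEA, hu, if_neg hiA, if_pos hm, hE]
          rw [hxI i hiA]; ring
        · have h2 : i ∉ Adag \ A := fun h => hidag (Finset.mem_sdiff.1 h).1
          have hxd0 : xdag i = 0 := by
            by_contra h; exact hidag (by rw [hAdag, mem_filter]; exact ⟨mem_univ _, h⟩)
          simp only [hEA, hu, if_neg hiA, if_neg h2, hE]
          rw [hxI i hiA, hxd0]; ring
    have hdisj : ∀ i, EA i = 0 ∨ u i = 0 := by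
      intro i
      by_cases hiA : i ∈ A
      · right
        have h2 : i ∉ Adag \ A := fun h => (Finset.mem_sdiff.1 h).2 hiA
        simp only [hu, if_neg h2]
      · left; simp [hEA, hiA]
    set SEA := ∑ i, EA i ^ 2 with hSEA
    set SU := ∑ i, u i ^ 2 with hSU
    have hSEAnn : 0 ≤ SEA := Finset.sum_nonneg fun _ _ => sq_nonneg _
    have hSUnn : 0 ≤ SU := Finset.sum_nonneg fun _ _ => sq_nonneg _
    have hsplit : SE = SEA + SU := by
      rw [hSE, hSEA, hSU, ← Finset.sum_add_distrib]
      refine Finset.sum_congr rfl fun i _ => ?_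
      rcases hdisj i with h | h <;> rw [hEAu i, h] <;> ring
    set a := (A.card : ℝ) with ha
    set k := ((Adag \ A).card : ℝ) with hk
    have hak : a + k = (T : ℝ) := by
      have h := Finset.card_sdiff_add_card_eq_card hA
      rw [ha, hk, hT]
      exact_mod_cast (by omega : A.card + (Adag \ A).card = Adag.card)
    have hann : (0:ℝ) ≤ a := Nat.cast_nonneg _
    have hknn : (0:ℝ) ≤ k := Nat.cast_nonneg _
    have hSU9 : SU ≤ 9 * lam ^ 2 * k := by
      have h1 : ∀ i, u i ^ 2 = if i ∈ Adag \ A then xdag i ^ 2 else 0 := by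
        intro i
        by_cases h : i ∈ Adag \ A
        · simp only [hu, if_pos h]
        · simp only [hu, if_neg h]; ring
      rw [hSU]
      calc ∑ i, u i ^ 2 = ∑ i ∈ Adag \ A, xdag i ^ 2 := by
            simp only [h1]
            rw [Finset.sum_ite_mem, Finset.univ_inter]
        _ ≤ (Adag \ A).card • (9 * lam ^ 2) := by
            refine Finset.sum_le_card_nsmul _ _ _ fun i hi => ?_
            have hiA : i ∉ A := (Finset.mem_sdiff.1 hi).2
            have h3 : ¬ (3 * lam ≤ |xdag i|) := fun hc =>
              hiA (hJ3 (mem_filter.2 ⟨mem_univ _, hc⟩))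
            push_neg at h3
            nlinarith only [abs_nonneg (xdag i), sq_abs (xdag i), h3, hlam]
        _ = 9 * lam ^ 2 * k := by rw [nsmul_eq_mul, hk]; ring
    have hEA_A : ∀ i, EA i ≠ 0 → i ∈ A := by
      intro i h; by_contra hc; exact h (by simp [hEA, hc])
    have hcardEA : (univ.filter fun i => EA i ≠ 0).card ≤ T + 1 := by
      have h1 := Finset.card_le_card
        (fun i hi => hEA_A i (mem_filter.1 hi).2 : (univ.filter fun i => EA i ≠ 0) ⊆ A)
      have h2 : A.card ≤ Adag.card := Finset.card_le_card hA
      omega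
    have hcardU : (univ.filter fun i => EA i ≠ 0 ∨ u i ≠ 0).card ≤ T + 1 := by
      have hsub : (univ.filter fun i => EA i ≠ 0 ∨ u i ≠ 0) ⊆ Adag := by
        intro i hi
        rcases (mem_filter.1 hi).2 with h | h
        · exact hA (hEA_A i h)
        · have hm : i ∈ Adag \ A := by
            by_contra hc; exact h (by simp only [hu, if_neg hc])
          exact (Finset.mem_sdiff.1 hm).1
      have := Finset.card_le_card hsub
      omega
    have hQ1 := (hRIP EA hcardEA).1
    rw [← hSEA] at hQ1
    have hP2 := StmtAux.ro hRIP EA u hdisj hcardU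
    rw [← hSEA, ← hSU] at hP2
    have hmvE : ∀ j, (Ψ *ᵥ E) j = (Ψ *ᵥ EA) j + (Ψ *ᵥ u) j := by
      intro j
      simp only [mulVec, dotProduct, ← Finset.sum_add_distrib]
      refine Finset.sum_congr rfl fun t _ => ?_
      rw [hEAu t, mul_add]
    set dA : Fin p → ℝ := fun i => if i ∈ A then d i else 0 with hdAv
    have hQ2 : ∑ j, (Ψ *ᵥ EA) j ^ 2
        = ∑ i, EA i * dA i - ∑ j, (Ψ *ᵥ EA) j * (Ψ *ᵥ u) j := by
      have h1 : ∑ j, (Ψ *ᵥ EA) j ^ 2 = ∑ i, EA i * (∑ j, Ψ j i * (Ψ *ᵥ EA) j) := by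
        rw [← StmtAux.sum_swap_mul Ψ EA (Ψ *ᵥ EA)]
        exact Finset.sum_congr rfl fun j _ => (sq ((Ψ *ᵥ EA) j)).symm ▸ rfl
      have h2 : ∑ j, (Ψ *ᵥ EA) j * (Ψ *ᵥ u) j = ∑ i, EA i * (∑ j, Ψ j i * (Ψ *ᵥ u) j) :=
        StmtAux.sum_swap_mul Ψ EA (Ψ *ᵥ u)
      rw [h1, h2, ← Finset.sum_sub_distrib]
      refine Finset.sum_congr rfl fun i _ => ?_
      by_cases hiA : i ∈ A
      · have hdi : d i = (∑ j, Ψ j i * (Ψ *ᵥ EA) j) + ∑ j, Ψ j i * (Ψ *ᵥ u) j := by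
          rw [hd i, ← Finset.sum_add_distrib]
          exact Finset.sum_congr rfl fun j _ => by rw [hmvE j, mul_add]
        have : dA i = d i := by simp [hdAv, hiA]
        rw [this, hdi]; ring
      · have h0 : EA i = 0 := by simp [hEA, hiA]
        rw [h0]; ring
    have hCS1 : ∑ i, EA i * dA i ≤ Real.sqrt SEA * Real.sqrt (∑ i, dA i ^ 2) := by
      have := StmtAux.cs_sum EA dA
      rwa [← hSEA] at this
    have hdAsq : ∑ i, dA i ^ 2 = a * lam ^ 2 := by
      have h1 : ∀ i, dA i ^ 2 = if i ∈ A then lam ^ 2 else 0 := by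
        intro i
        by_cases h : i ∈ A
        · have := hdA i h
          simp only [hdAv, if_pos h]
          nlinarith [sq_abs (d i)]
        · simp [hdAv, h]
      simp only [h1]
      rw [Finset.sum_ite_mem, Finset.univ_inter, Finset.sum_const, nsmul_eq_mul, ha]
    set F := Real.sqrt SEA with hF
    have hFnn : 0 ≤ F := Real.sqrt_nonneg _
    have hF2 : F ^ 2 = SEA := Real.sq_sqrt hSEAnn
    set b := Real.sqrt SU with hb
    have hbnn : 0 ≤ b := Real.sqrt_nonneg _
    have hb2 : b ^ 2 = SU := Real.sq_sqrt hSUnn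
    have hsan : 0 ≤ Real.sqrt a := Real.sqrt_nonneg _
    have hsa2 : Real.sqrt a ^ 2 = a := Real.sq_sqrt hann
    have hsqA : Real.sqrt (∑ i, dA i ^ 2) = Real.sqrt a * lam := by
      rw [hdAsq, Real.sqrt_mul hann, Real.sqrt_sq hlam.le]
    have hmain : (1 - δ) * SEA ≤ F * (Real.sqrt a * lam) + δ * F * b := by
      have h4 : -(∑ j, (Ψ *ᵥ EA) j * (Ψ *ᵥ u) j) ≤ δ * F * b := by
        calc -(∑ j, (Ψ *ᵥ EA) j * (Ψ *ᵥ u) j)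
            ≤ |∑ j, (Ψ *ᵥ EA) j * (Ψ *ᵥ u) j| := neg_le_abs _
          _ ≤ δ * F * b := hP2
      have h3 := hCS1
      rw [hsqA] at h3
      calc (1 - δ) * SEA ≤ ∑ j, (Ψ *ᵥ EA) j ^ 2 := hQ1
        _ = ∑ i, EA i * dA i - ∑ j, (Ψ *ᵥ EA) j * (Ψ *ᵥ u) j := hQ2
        _ ≤ F * (Real.sqrt a * lam) + δ * F * b := by
            have : ∑ i, EA i * dA i ≤ F * (Real.sqrt a * lam) := h3
            linarith
    have hstep : 4 * s * F ≤ lam * Real.sqrt a * (4 * s + 1) + b := by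
      rcases eq_or_lt_of_le hFnn with hF0 | hF0
      · rw [← hF0, mul_zero]
        have : 0 ≤ lam * Real.sqrt a * (4 * s + 1) := mul_nonneg (mul_nonneg hlam.le hsan) (by linarith)
        linarith
      · have h5 : (1 - δ) * F ≤ lam * Real.sqrt a + δ * b := by
          rw [← hF2] at hmain
          have hmm : ((1 - δ) * F) * F ≤ (lam * Real.sqrt a + δ * b) * F := by
            calc ((1 - δ) * F) * F = (1 - δ) * F ^ 2 := by ring
              _ ≤ F * (Real.sqrt a * lam) + δ * F * b := hmain
              _ = (lam * Real.sqrt a + δ * b) * F := by ring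
          exact le_of_mul_le_mul_right hmm hF0
        have e1 := mul_le_mul_of_nonneg_right h5 (show (0:ℝ) ≤ 4 * s + 1 by linarith)
        have e2 : 0 ≤ (1 - δ * (4 * s + 1)) * F := mul_nonneg (by linarith [hδs]) hFnn
        have e3 : 0 ≤ (1 - δ * (4 * s + 1)) * b := mul_nonneg (by linarith [hδs]) hbnn
        nlinarith only [e1, e2, e3]
    have hskn : 0 ≤ Real.sqrt k := Real.sqrt_nonneg _
    have hsk2 : Real.sqrt k ^ 2 = k := Real.sq_sqrt hknn
    have hbk : b ≤ 3 * lam * Real.sqrt k := by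
      have h9 : Real.sqrt SU ≤ Real.sqrt (9 * lam ^ 2 * k) := Real.sqrt_le_sqrt hSU9
      calc b ≤ Real.sqrt (9 * lam ^ 2 * k) := h9
        _ = 3 * lam * Real.sqrt k := by
            rw [show (9:ℝ) * lam ^ 2 * k = (3 * lam) ^ 2 * k by ring,
              Real.sqrt_mul (by positivity), Real.sqrt_sq (by positivity)]
    have hsq1 : (4 * s * F) ^ 2 ≤ (lam * Real.sqrt a * (4 * s + 1) + b) ^ 2 := by
      apply pow_le_pow_left₀ (by positivity) hstep
    have hsq2 : (lam * Real.sqrt a * (4 * s + 1) + b) ^ 2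
        ≤ (lam * Real.sqrt a * (4 * s + 1) + 3 * lam * Real.sqrt k) ^ 2 := by
      apply pow_le_pow_left₀ (add_nonneg (mul_nonneg (mul_nonneg hlam.le hsan) (by linarith)) hbnn) (by linarith)
    have hcs2 : (lam * Real.sqrt a * (4 * s + 1) + 3 * lam * Real.sqrt k) ^ 2
        ≤ ((4 * s + 1) ^ 2 + 9) * (lam ^ 2 * a + lam ^ 2 * k) := by
      calc (lam * Real.sqrt a * (4 * s + 1) + 3 * lam * Real.sqrt k) ^ 2
          ≤ (lam * Real.sqrt a * (4 * s + 1) + 3 * lam * Real.sqrt k) ^ 2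
            + lam ^ 2 * (3 * Real.sqrt a - (4 * s + 1) * Real.sqrt k) ^ 2 :=
            le_add_of_nonneg_right (by positivity)
        _ = ((4 * s + 1) ^ 2 + 9) * (lam ^ 2 * Real.sqrt a ^ 2 + lam ^ 2 * Real.sqrt k ^ 2) := by
            ring
        _ = ((4 * s + 1) ^ 2 + 9) * (lam ^ 2 * a + lam ^ 2 * k) := by rw [hsa2, hsk2]
    have hks : k ≤ s ^ 2 := by rw [hs2T]; linarith
    have t1 : 16 * s ^ 2 * F ^ 2 ≤ (16 * s ^ 2 + 8 * s + 10) * (lam ^ 2 * s ^ 2) := by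
      have hch := (hsq1.trans hsq2).trans hcs2
      calc 16 * s ^ 2 * F ^ 2 = (4 * s * F) ^ 2 := by ring
        _ ≤ ((4 * s + 1) ^ 2 + 9) * (lam ^ 2 * a + lam ^ 2 * k) := hch
        _ = ((4 * s + 1) ^ 2 + 9) * (lam ^ 2 * (a + k)) := by ring
        _ = (16 * s ^ 2 + 8 * s + 10) * (lam ^ 2 * s ^ 2) := by
            rw [hak, ← hs2T]; ring
    have t2 : 16 * s ^ 2 * b ^ 2 ≤ 16 * s ^ 2 * (9 * lam ^ 2 * s ^ 2) := by
      have hb9 : b ^ 2 ≤ 9 * lam ^ 2 * s ^ 2 := by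
        rw [hb2]
        have h1 : 9 * lam ^ 2 * k ≤ 9 * lam ^ 2 * s ^ 2 :=
          mul_le_mul_of_nonneg_left hks (by positivity)
        linarith only [hSU9, h1]
      exact mul_le_mul_of_nonneg_left hb9 (by positivity)
    have hs2pos : (0:ℝ) < 16 * s ^ 2 := by positivity
    have hfin : 16 * s ^ 2 * SE ≤ 16 * s ^ 2 * (lam ^ 2 * (10 * s ^ 2 + s / 2 + 5 / 8)) := by
      rw [hsplit, ← hF2, ← hb2]
      have hid : (16 * s ^ 2 + 8 * s + 10) * (lam ^ 2 * s ^ 2)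
          + 16 * s ^ 2 * (9 * lam ^ 2 * s ^ 2)
          = 16 * s ^ 2 * (lam ^ 2 * (10 * s ^ 2 + s / 2 + 5 / 8)) := by ring
      have hdistr : 16 * s ^ 2 * (F ^ 2 + b ^ 2) = 16 * s ^ 2 * F ^ 2 + 16 * s ^ 2 * b ^ 2 := by
        ring
      linarith only [t1, t2, hid, hdistr]
    exact (mul_le_mul_iff_right₀ hs2pos).1 hfin
  -- ####################### KEY POINTWISE BOUND #######################
  have hKey : ∀ i, i ∉ Finset.univ.filter (fun i => lam < |x i + d i|) →
      |xdag i| < 2 * lam := by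
    intro i hiA'
    by_contra hcon
    push_neg at hcon
    have habs : |x i + d i| ≤ lam := by
      by_contra h
      push_neg at h
      exact hiA' (mem_filter.2 ⟨mem_univ _, h⟩)
    set ei : Fin p → ℝ := fun j => if j = i then (1:ℝ) else 0 with hei
    have hei_sq : ∑ j, ei j ^ 2 = 1 := by
      have h1 : ∀ j, ei j ^ 2 = if j = i then (1:ℝ) else 0 := by
        intro j; by_cases h : j = i <;> simp [hei, h]
      simp only [h1]
      rw [Finset.sum_ite_eq' univ i (fun _ => (1:ℝ))]
      simp
    have hei_card : (univ.filter fun j => ei j ≠ 0).card ≤ T + 1 := by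
      have hsub : (univ.filter fun j => ei j ≠ 0) ⊆ {i} := by
        intro j hj
        rw [Finset.mem_singleton]
        by_contra hc
        exact (mem_filter.1 hj).2 (by simp [hei, hc])
      have := Finset.card_le_card hsub
      simp only [Finset.card_singleton] at this
      omega
    obtain ⟨hc1, hc2⟩ := hRIP ei hei_card
    rw [hei_sq, mul_one] at hc1 hc2
    set c := ∑ j, (Ψ *ᵥ ei) j ^ 2 with hcdef
    have hmv_ei : ∀ j, (Ψ *ᵥ ei) j = Ψ j i := by
      intro j
      simp only [hei, mulVec, dotProduct, mul_ite, mul_one, mul_zero]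
      rw [Finset.sum_ite_eq' univ i (fun t => Ψ j t)]
      simp
    set E' : Fin p → ℝ := fun j => if j = i then 0 else E j with hE'
    set SE' := ∑ j, E' j ^ 2 with hSE'
    have hSE'nn : 0 ≤ SE' := Finset.sum_nonneg fun _ _ => sq_nonneg _
    set R := Real.sqrt SE' with hRdef
    have hRnn : 0 ≤ R := Real.sqrt_nonneg _
    have hR2 : R ^ 2 = SE' := Real.sq_sqrt hSE'nn
    have hdisj : ∀ j, ei j = 0 ∨ E' j = 0 := by
      intro j
      by_cases h : j = i
      · right; simp [hE', h]
      · left; simp [hei, h]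
    have hcardU : (univ.filter fun j => ei j ≠ 0 ∨ E' j ≠ 0).card ≤ T + 1 := by
      have hsub : (univ.filter fun j => ei j ≠ 0 ∨ E' j ≠ 0) ⊆ insert i Adag := by
        intro j hj
        rcases (mem_filter.1 hj).2 with h | h
        · have hj' : j = i := by
            by_contra hc; exact h (by simp [hei, hc])
          simp [hj']
        · have hje : E j ≠ 0 := by
            by_contra hc
            apply h
            by_cases hji : j = i <;> simp [hE', hji, hc]
          exact Finset.mem_insert_of_mem (hEsupp j hje)
      have h1 := Finset.card_le_card hsub
      have h2 := Finset.card_insert_le i Adag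
      omega
    have hro := StmtAux.ro hRIP ei E' hdisj hcardU
    rw [hei_sq, Real.sqrt_one, mul_one, ← hSE', ← hRdef] at hro
    set P := ∑ j, Ψ j i * (Ψ *ᵥ E') j with hP
    have hroP : |P| ≤ δ * R := by
      have h1 : ∑ j, (Ψ *ᵥ ei) j * (Ψ *ᵥ E') j = P :=
        Finset.sum_congr rfl fun j _ => by rw [hmv_ei j]
      rwa [h1] at hro
    have hceq : ∑ j, Ψ j i * (Ψ *ᵥ ei) j = c := by
      rw [hcdef]
      exact Finset.sum_congr rfl fun j _ => by rw [hmv_ei j]; ring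
    have hmvEj : ∀ j, (Ψ *ᵥ E) j = E i * (Ψ *ᵥ ei) j + (Ψ *ᵥ E') j := by
      intro j
      simp only [mulVec, dotProduct, Finset.mul_sum, ← Finset.sum_add_distrib]
      refine Finset.sum_congr rfl fun t _ => ?_
      by_cases h : t = i
      · subst h; simp [hei, hE']; ring
      · simp [hei, h, hE']
    have hdi : d i = E i * c + P := by
      rw [hd i]
      calc ∑ j, Ψ j i * (Ψ *ᵥ E) j
          = ∑ j, (E i * (Ψ j i * (Ψ *ᵥ ei) j) + Ψ j i * (Ψ *ᵥ E') j) := by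
            refine Finset.sum_congr rfl fun j _ => ?_
            rw [hmvEj j]; ring
        _ = E i * c + P := by
            rw [Finset.sum_add_distrib, ← Finset.mul_sum, hceq, hP]
    have hSEdec : SE = E i ^ 2 + SE' := by
      have h1 : SE - SE' = E i ^ 2 := by
        rw [hSE, hSE', ← Finset.sum_sub_distrib]
        have h2 : ∀ t ∈ univ, E t ^ 2 - E' t ^ 2 = if t = i then E i ^ 2 else 0 := by
          intro t _
          by_cases h : t = i
          · subst h; simp [hE']
          · simp [hE', h]
        rw [Finset.sum_congr rfl h2, Finset.sum_ite_eq' univ i (fun _ => E i ^ 2)]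
        simp
      linarith only [h1]
    have hxd : x i + d i = xdag i + E i * (c - 1) + P := by
      have hx : x i = xdag i - E i := by simp [hE]
      rw [hx, hdi]; ring
    have hkey1 : lam * (1 - 2 * δ) ≤ δ * R := by
      by_cases hiA : i ∈ A
      · have hdiabs : |d i| = lam := hdA i hiA
        have h1 : |E i| * (1 - δ) ≤ lam + δ * R := by
          have e1 : |E i| * (1 - δ) ≤ |E i| * c :=
            mul_le_mul_of_nonneg_left hc1 (abs_nonneg _)
          have e2 : |E i * c| ≤ |d i| + |P| := by
            rw [show E i * c = d i - P from by rw [hdi]; ring]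
            calc |d i - P| = |d i + -P| := by rw [sub_eq_add_neg]
              _ ≤ |d i| + |-P| := abs_add_le _ _
              _ = |d i| + |P| := by rw [abs_neg]
          calc |E i| * (1 - δ) ≤ |E i| * c := e1
            _ = |E i * c| := by rw [abs_mul, abs_of_nonneg (by linarith : (0:ℝ) ≤ c)]
            _ ≤ |d i| + |P| := e2
            _ ≤ lam + δ * R := by rw [hdiabs]; linarith [hroP]
        have h2 : 2 * lam ≤ lam + δ * |E i| + δ * R := by
          have e3 : |xdag i| ≤ |x i + d i| + (|E i * (c - 1)| + |P|) := by
            have hre : xdag i = (x i + d i) + (-(E i * (c - 1)) + -P) := by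
              rw [hxd]; ring
            rw [hre]
            calc |(x i + d i) + (-(E i * (c - 1)) + -P)|
                ≤ |x i + d i| + |(-(E i * (c - 1)) + -P)| := abs_add_le _ _
              _ ≤ |x i + d i| + (|E i * (c - 1)| + |P|) := by
                  have := abs_add_le (-(E i * (c - 1))) (-P)
                  rw [abs_neg, abs_neg] at this
                  linarith
          have e4 : |E i * (c - 1)| ≤ |E i| * δ := by
            rw [abs_mul]
            exact mul_le_mul_of_nonneg_left
              (abs_le.2 ⟨by linarith, by linarith⟩) (abs_nonneg _)
          calc 2 * lam ≤ |xdag i| := hcon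
            _ ≤ |x i + d i| + (|E i * (c - 1)| + |P|) := e3
            _ ≤ lam + (|E i| * δ + δ * R) := by linarith [habs, hroP, e4]
            _ = lam + δ * |E i| + δ * R := by ring
        have m1 := mul_le_mul_of_nonneg_left h1 hδ0.le
        have m2 := mul_le_mul_of_nonneg_left h2 (show (0:ℝ) ≤ 1 - δ by linarith)
        nlinarith only [m1, m2]
      · have hx0 : x i = 0 := hxI i hiA
        have hEi : E i = xdag i := by simp [hE, hx0]
        have e5 : |xdag i| * c - |P| ≤ lam := by
          have e6 : |xdag i| * c = |xdag i * c| := by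
            rw [abs_mul, abs_of_nonneg (by linarith : (0:ℝ) ≤ c)]
          have e7 : |xdag i * c| ≤ |xdag i * c + P| + |P| := by
            calc |xdag i * c| = |(xdag i * c + P) + -P| := by ring_nf
              _ ≤ |xdag i * c + P| + |-P| := abs_add_le _ _
              _ = |xdag i * c + P| + |P| := by rw [abs_neg]
          have e8 : x i + d i = xdag i * c + P := by
            rw [hxd, hEi]; ring
          rw [e6]
          calc |xdag i * c| - |P| ≤ |xdag i * c + P| := by linarith [e7]
            _ = |x i + d i| := by rw [e8]
            _ ≤ lam := habs
        have e9 : 2 * lam * (1 - δ) ≤ |xdag i| * c :=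
          mul_le_mul hcon hc1 (by linarith) (abs_nonneg _)
        linarith [hroP, e5, e9]
    have hRlow : lam * (4 * s - 1) ≤ R := by
      have h7 : δ * (4 * s - 1) ≤ 1 - 2 * δ := by nlinarith only [hδs]
      have h8 : δ * (lam * (4 * s - 1)) ≤ δ * R := by
        calc δ * (lam * (4 * s - 1)) ≤ lam * (1 - 2 * δ) := by
              have := mul_le_mul_of_nonneg_left h7 hlam.le
              linarith only [this]
          _ ≤ δ * R := hkey1
      exact le_of_mul_le_mul_left h8 hδ0
    have h4s1 : (0:ℝ) ≤ 4 * s - 1 := by linarith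
    have hSE'low : lam ^ 2 * (4 * s - 1) ^ 2 ≤ SE' := by
      rw [← hR2]
      have h9 : 0 ≤ lam * (4 * s - 1) := mul_nonneg hlam.le h4s1
      calc lam ^ 2 * (4 * s - 1) ^ 2 = (lam * (4 * s - 1)) ^ 2 := by ring
        _ ≤ R ^ 2 := pow_le_pow_left₀ h9 hRlow 2
    by_cases hiA : i ∈ A
    · have hT2 : (2:ℝ) ≤ s ^ 2 := by
        have hne : i ≠ i₀ := fun h => hi₀A (h ▸ hiA)
        have hcc : 1 < Adag.card := Finset.one_lt_card.2 ⟨i, hA hiA, i₀, hi₀dag, hne⟩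
        have h2T : 2 ≤ T := by omega
        rw [hs2T]; exact_mod_cast h2T
      have hSE'SE : SE' ≤ SE := by rw [hSEdec]; linarith only [sq_nonneg (E i)]
      nlinarith only [hUpper, hSE'low, hSE'SE, hT2, mul_pos hlam hlam,
        mul_nonneg (mul_pos hlam hlam).le (sq_nonneg (s - 17/10)),
        mul_nonneg (mul_pos hlam hlam).le (by linarith only [hT2] : (0:ℝ) ≤ s ^ 2 - 2)]
    · have hx0 : x i = 0 := hxI i hiA
      have hEi : E i = xdag i := by simp [hE, hx0]
      have hxd2 : 4 * lam ^ 2 ≤ E i ^ 2 := by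
        rw [hEi]
        nlinarith only [hcon, hlam, sq_abs (xdag i)]
      nlinarith only [hUpper, hSE'low, hSEdec, hxd2, mul_pos hlam hlam,
        mul_nonneg (mul_pos hlam hlam).le (sq_nonneg (s - 17/24))]
  -- ####################### CONCLUSION #######################
  set f : Fin p → NNReal := fun i => Real.nnabs (xdag i) with hf
  have hle : f i₀ ≤ Aᶜ.sup f := Finset.le_sup (Finset.mem_compl.2 hi₀A)
  have hM0 : (⊥ : NNReal) < Aᶜ.sup f := by
    refine lt_of_lt_of_le ?_ hle
    have h0 : (0:ℝ) < |xdag i₀| := by linarith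
    rw [bot_eq_zero]
    have : (0:ℝ) < (Real.nnabs (xdag i₀) : ℝ) := by rwa [Real.coe_nnabs]
    exact_mod_cast this
  refine (Finset.sup_lt_iff hM0).2 ?_
  intro i hi
  have hiA' := Finset.mem_compl.1 hi
  have h2 := hKey i hiA'
  refine lt_of_lt_of_le ?_ hle
  rw [← NNReal.coe_lt_coe]
  simp only [hf, Real.coe_nnabs]
  linarith
end

section
/- (Fixed point of the active-set map implies inclusion of J_{λ,2}.) In the noise-free setting under Assumption 1, let A ⊆ A† satisfy J_{λ,3} ⊆ A, let d ∈ ℝ^p have |d_i| = λ for all i ∈ A, let x ∈ ℝ^p be given by x_i = 0 for i ∉ A and x_A = (Ψ_AᵗΨ_A)⁻¹(Ψ_Aᵗ y − d_A), set d_i = Ψ_iᵗ(y − Ψ_A x_A) for i ∉ A, and define A' = {i : |x_i + d_i| > λ}. If A' = A, then J_{λ,2} ⊆ A. -/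
open Matrix

set_option maxHeartbeats 1000000 in
lemma polar_aux {n p : ℕ} (Ψ : Matrix (Fin n) (Fin p) ℝ) (k : ℕ) (δ : ℝ) (hδ0 : 0 ≤ δ)
    (hRIP : HasRIP Ψ k δ) (i₀ : Fin p) (v : Fin p → ℝ) (hv0 : v i₀ = 0)
    (hcard : (Finset.univ.filter (fun i => v i ≠ 0)).card + 1 ≤ k) :
    |∑ l, (Ψ *ᵥ fun i => if i = i₀ then (1:ℝ) else 0) l * (Ψ *ᵥ v) l|
      ≤ δ * Real.sqrt (∑ i, v i ^ 2) := by
  set ind : Fin p → ℝ := fun i => if i = i₀ then (1:ℝ) else 0 with hind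
  by_cases hV : ∑ i, v i ^ 2 = 0
  · have hv : v = 0 := by
      funext i
      have := (Finset.sum_eq_zero_iff_of_nonneg (fun i _ => sq_nonneg (v i))).mp hV i
        (Finset.mem_univ i)
      exact pow_eq_zero_iff (two_ne_zero) |>.mp this
    have : Ψ *ᵥ v = 0 := by rw [hv, Matrix.mulVec_zero]
    simp [this, Real.sqrt_nonneg, mul_nonneg hδ0 (Real.sqrt_nonneg _)]
  · have hVpos : 0 < ∑ i, v i ^ 2 :=
      lt_of_le_of_ne (Finset.sum_nonneg fun i _ => sq_nonneg _) (Ne.symm hV)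
    set N := Real.sqrt (∑ i, v i ^ 2) with hNdef
    have hN : 0 < N := Real.sqrt_pos.mpr hVpos
    have hN2 : N ^ 2 = ∑ i, v i ^ 2 := Real.sq_sqrt hVpos.le
    set t := Real.sqrt N with htdef
    have ht : 0 < t := Real.sqrt_pos.mpr hN
    have ht2 : t ^ 2 = N := Real.sq_sqrt hN.le
    set w : ℝ → Fin p → ℝ := fun c i => t * ind i + c * (v i / t) with hw
    have hkey : ∀ c : ℝ, c ^ 2 = 1 →
        (1 - δ) * (2 * N) ≤ ∑ l, (Ψ *ᵥ w c) l ^ 2 ∧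
          ∑ l, (Ψ *ᵥ w c) l ^ 2 ≤ (1 + δ) * (2 * N) := by
      intro c hc
      have hfil : Finset.univ.filter (fun i => w c i ≠ 0) ⊆
          insert i₀ (Finset.univ.filter (fun i => v i ≠ 0)) := by
        intro i hi
        simp only [Finset.mem_filter, Finset.mem_univ, true_and] at hi
        simp only [Finset.mem_insert, Finset.mem_filter, Finset.mem_univ, true_and]
        by_contra h
        push_neg at h
        obtain ⟨h1, h2⟩ := h
        apply hi
        simp [hw, hind, h1, h2]
      have hcard' : (Finset.univ.filter (fun i => w c i ≠ 0)).card ≤ k := by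
        calc (Finset.univ.filter (fun i => w c i ≠ 0)).card
            ≤ (insert i₀ (Finset.univ.filter (fun i => v i ≠ 0))).card :=
              Finset.card_le_card hfil
          _ ≤ (Finset.univ.filter (fun i => v i ≠ 0)).card + 1 := Finset.card_insert_le _ _
          _ ≤ k := hcard
      have hnorm : ∑ i, w c i ^ 2 = 2 * N := by
        have hpt : ∀ i, w c i ^ 2 = t ^ 2 * ind i ^ 2 + c ^ 2 * (v i / t) ^ 2 := by
          intro i
          by_cases h : i = i₀
          · subst h; simp [hw, hind, hv0]
          · simp [hw, hind, h]; ring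
        rw [Finset.sum_congr rfl (fun i _ => hpt i), Finset.sum_add_distrib,
          ← Finset.mul_sum, ← Finset.mul_sum]
        have h1 : ∑ i, ind i ^ 2 = 1 := by simp [hind, Finset.sum_ite_eq']
        have h2 : ∑ i, (v i / t) ^ 2 = (∑ i, v i ^ 2) / t ^ 2 := by
          simp [div_pow, Finset.sum_div]
        rw [h1, h2, ht2, ← hN2, hc]
        field_simp
        ring
      have := hRIP (w c) hcard'
      rw [hnorm] at this
      exact this
    obtain ⟨hlo1, hhi1⟩ := hkey 1 (by norm_num)
    obtain ⟨hlo2, hhi2⟩ := hkey (-1) (by norm_num)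
    have hmv : ∀ c : ℝ, Ψ *ᵥ w c = fun l => t * (Ψ *ᵥ ind) l + (c / t) * (Ψ *ᵥ v) l := by
      intro c
      have : w c = t • ind + (c / t) • v := by
        funext i; simp [hw]; ring
      rw [this, Matrix.mulVec_add, Matrix.mulVec_smul, Matrix.mulVec_smul]
      rfl
    have hdiff : ∑ l, (Ψ *ᵥ w 1) l ^ 2 - ∑ l, (Ψ *ᵥ w (-1)) l ^ 2 =
        4 * ∑ l, (Ψ *ᵥ ind) l * (Ψ *ᵥ v) l := by
      rw [hmv 1, hmv (-1), ← Finset.sum_sub_distrib, Finset.mul_sum]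
      apply Finset.sum_congr rfl
      intro l _
      field_simp
      ring
    rw [abs_le]
    constructor <;> nlinarith [hN.le]


set_option maxHeartbeats 1000000 in
/-- if `J_{λ,3} ⊆ A ⊆ A†` and the PDAS active-set map fixes `A`
(i.e. `A' = A`), then `J_{λ,2} ⊆ A`. -/
theorem stmt_16 {n p : ℕ} (Ψ : Matrix (Fin n) (Fin p) ℝ)
    (xdag : Fin p → ℝ) (Adag : Finset (Fin p))
    (hAdag : Adag = Finset.univ.filter (fun i => xdag i ≠ 0))
    (T : ℕ) (hT : T = Adag.card)
    (y : Fin n → ℝ) (hy : y = Ψ *ᵥ xdag)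
    (δ : ℝ) (hδ0 : 0 < δ) (hδ1 : δ < 1)
    (hRIP : HasRIP Ψ (T + 1) δ)
    (hAss1 : δ ≤ 1 / (4 * Real.sqrt T + 1))
    (lam : ℝ) (hlam : 0 < lam)
    (A : Finset (Fin p)) (hA : A ⊆ Adag)
    (hJ3 : Finset.univ.filter (fun i => 3 * lam ≤ |xdag i|) ⊆ A)
    (d x : Fin p → ℝ)
    (hdA : ∀ i ∈ A, |d i| = lam)
    (hxI : ∀ i ∉ A, x i = 0)
    (hxA : (fun j : {i // i ∈ A} => x j.1) =
      ((colSub Ψ A)ᵀ * colSub Ψ A)⁻¹ *ᵥ ((colSub Ψ A)ᵀ *ᵥ y - fun j => d j.1))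
    (hdI : ∀ i ∉ A, d i = (Ψᵀ *ᵥ (y - colSub Ψ A *ᵥ fun j => x j.1)) i)
    (hfix : Finset.univ.filter (fun i => lam < |x i + d i|) = A) :
    Finset.univ.filter (fun i => 2 * lam ≤ |xdag i|) ⊆ A := by
  classical
  set e : Fin p → ℝ := xdag - x with he
  set g : Fin p → ℝ := fun i => ∑ l, Ψ l i * (Ψ *ᵥ e) l with hg
  have hBgen : ∀ z : {i // i ∈ A} → ℝ,
      colSub Ψ A *ᵥ z = Ψ *ᵥ (fun i => if h : i ∈ A then z ⟨i, h⟩ else 0) := by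
    intro z
    funext l
    simp only [Matrix.mulVec, dotProduct, colSub, Matrix.of_apply]
    calc ∑ j : {i // i ∈ A}, Ψ l j.1 * z j
        = ∑ j ∈ A.attach, Ψ l j.1 * (if h : (j : Fin p) ∈ A then z ⟨j, h⟩ else 0) := by
          rw [← Finset.univ_eq_attach]
          refine Finset.sum_congr rfl fun j _ => ?_
          rw [dif_pos j.2]
      _ = ∑ i ∈ A, Ψ l i * (if h : i ∈ A then z ⟨i, h⟩ else 0) :=
          Finset.sum_attach A (fun i => Ψ l i * (if h : i ∈ A then z ⟨i, h⟩ else 0))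
      _ = ∑ i, Ψ l i * (if h : i ∈ A then z ⟨i, h⟩ else 0) :=
          Finset.sum_subset (Finset.subset_univ A)
            (fun i _ hi => by rw [dif_neg hi, mul_zero])
  have hxeq : (fun i => if h : i ∈ A then x i else 0) = x := by
    funext i; by_cases h : i ∈ A <;> simp [h, hxI]
  have hBx : colSub Ψ A *ᵥ (fun j : {i // i ∈ A} => x j.1) = Ψ *ᵥ x := by
    rw [hBgen]; exact congrArg _ hxeq
  have hye : ∀ l, y l - (Ψ *ᵥ x) l = (Ψ *ᵥ e) l := by
    intro l
    rw [hy, he, Matrix.mulVec_sub]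
    rfl
  have hswap : ∀ (wv : Fin n → ℝ) (z : Fin p → ℝ),
      ∑ l, (Ψ *ᵥ z) l * wv l = ∑ i, z i * (∑ l, Ψ l i * wv l) := by
    intro wv z
    simp only [Matrix.mulVec, dotProduct, Finset.sum_mul, Finset.mul_sum]
    rw [Finset.sum_comm]
    exact Finset.sum_congr rfl fun i _ => Finset.sum_congr rfl fun l _ => by ring
  have hswapT : ∀ (wv : Fin n → ℝ) (z : {i // i ∈ A} → ℝ),
      ∑ j, z j * ((colSub Ψ A)ᵀ *ᵥ wv) j = ∑ l, (colSub Ψ A *ᵥ z) l * wv l := by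
    intro wv z
    simp only [Matrix.mulVec, dotProduct, Matrix.transpose_apply, colSub,
      Matrix.of_apply, Finset.sum_mul, Finset.mul_sum]
    rw [Finset.sum_comm]
    exact Finset.sum_congr rfl fun l _ => Finset.sum_congr rfl fun j _ => by ring
  have hMmul : ∀ z : {i // i ∈ A} → ℝ,
      ((colSub Ψ A)ᵀ * colSub Ψ A) *ᵥ z = (colSub Ψ A)ᵀ *ᵥ (colSub Ψ A *ᵥ z) :=
    fun z => (Matrix.mulVec_mulVec z (colSub Ψ A)ᵀ (colSub Ψ A)).symm
  have hker : ∀ z : {i // i ∈ A} → ℝ,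
      ((colSub Ψ A)ᵀ * colSub Ψ A) *ᵥ z = 0 → z = 0 := by
    intro z hz
    set z' : Fin p → ℝ := fun i => if h : i ∈ A then z ⟨i, h⟩ else 0 with hz'
    have hq : ∑ j, z j * ((((colSub Ψ A)ᵀ * colSub Ψ A)) *ᵥ z) j
        = ∑ l, (Ψ *ᵥ z') l ^ 2 := by
      rw [hMmul z, hswapT, hBgen]
      exact Finset.sum_congr rfl fun l _ => (sq _).symm
    have h0 : ∑ l, (Ψ *ᵥ z') l ^ 2 = 0 := by rw [← hq, hz]; simp
    have hcard : (Finset.univ.filter (fun i => z' i ≠ 0)).card ≤ T + 1 := by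
      have hsub : Finset.univ.filter (fun i => z' i ≠ 0) ⊆ A := by
        intro i hi
        simp only [Finset.mem_filter, Finset.mem_univ, true_and] at hi
        by_contra h
        exact hi (by simp [hz', h])
      calc _ ≤ A.card := Finset.card_le_card hsub
        _ ≤ Adag.card := Finset.card_le_card hA
        _ ≤ T + 1 := by omega
    obtain ⟨hlow, _⟩ := hRIP z' hcard
    rw [h0] at hlow
    have hS := Finset.sum_nonneg (fun i (_ : i ∈ Finset.univ) => sq_nonneg (z' i))
    have hzero : ∑ i, z' i ^ 2 = 0 := by
      refine le_antisymm ?_ hS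
      by_contra h
      push_neg at h
      nlinarith [mul_pos (show (0:ℝ) < 1 - δ by linarith) h]
    funext j
    have := (Finset.sum_eq_zero_iff_of_nonneg (fun i _ => sq_nonneg (z' i))).mp hzero j.1
      (Finset.mem_univ _)
    have hzj : z' j.1 = 0 := pow_eq_zero_iff two_ne_zero |>.mp this
    simpa [hz', j.2] using hzj
  have hinj : Function.Injective (((colSub Ψ A)ᵀ * colSub Ψ A).mulVec) := by
    intro a b hab
    have h0 : ((colSub Ψ A)ᵀ * colSub Ψ A) *ᵥ (a - b) = 0 := by
      rw [Matrix.mulVec_sub, hab, sub_self]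
    exact sub_eq_zero.mp (hker _ h0)
  have hMdet : IsUnit ((colSub Ψ A)ᵀ * colSub Ψ A).det :=
    (Matrix.isUnit_iff_isUnit_det _).mp (Matrix.mulVec_injective_iff_isUnit.mp hinj)
  have hMx : ((colSub Ψ A)ᵀ * colSub Ψ A) *ᵥ (fun j : {i // i ∈ A} => x j.1)
      = ((colSub Ψ A)ᵀ *ᵥ y - fun j => d j.1) := by
    rw [hxA, Matrix.mulVec_mulVec, Matrix.mul_nonsing_inv _ hMdet, Matrix.one_mulVec]
  have hdg : ∀ i, d i = g i := by
    intro i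
    by_cases hi : i ∈ A
    · have hcomp := congrFun hMx ⟨i, hi⟩
      rw [hMmul, hBx] at hcomp
      simp only [Pi.sub_apply] at hcomp
      have hL : ((colSub Ψ A)ᵀ *ᵥ (Ψ *ᵥ x)) (⟨i, hi⟩ : {i // i ∈ A})
          = ∑ l, Ψ l i * (Ψ *ᵥ x) l := rfl
      have hR : ((colSub Ψ A)ᵀ *ᵥ y) (⟨i, hi⟩ : {i // i ∈ A}) = ∑ l, Ψ l i * y l := rfl
      rw [hL, hR] at hcomp
      have hdi : d i = ∑ l, Ψ l i * (y l - (Ψ *ᵥ x) l) := by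
        simp only [mul_sub, Finset.sum_sub_distrib]
        linarith
      rw [hdi]
      simp only [hg]
      exact Finset.sum_congr rfl fun l _ => by rw [hye l]
    · rw [hdI i hi]
      have hYe : y - colSub Ψ A *ᵥ (fun j : {i // i ∈ A} => x j.1) = Ψ *ᵥ e := by
        funext l
        rw [Pi.sub_apply, congrFun hBx l, hye l]
      rw [hYe]
      simp only [hg]
      rfl
  have hgle : ∀ i, |g i| ≤ lam := by
    intro i
    by_cases hi : i ∈ A
    · rw [← hdg]; exact (hdA i hi).le
    · have hnot : i ∉ Finset.univ.filter (fun i => lam < |x i + d i|) := by rw [hfix]; exact hi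
      simp only [Finset.mem_filter, Finset.mem_univ, true_and, not_lt] at hnot
      rw [← hdg]
      calc |d i| = |x i + d i| := by rw [hxI i hi, zero_add]
        _ ≤ lam := hnot
  -- support of e
  have hesupp : ∀ i, i ∉ Adag → e i = 0 := by
    intro i hi
    have hx0 : x i = 0 := hxI i (fun h => hi (hA h))
    have hxd : xdag i = 0 := by
      by_contra h
      exact hi (hAdag ▸ Finset.mem_filter.mpr ⟨Finset.mem_univ _, h⟩)
    simp [he, hx0, hxd]
  have hecard : (Finset.univ.filter (fun i => e i ≠ 0)).card ≤ T := by
    have hsub : Finset.univ.filter (fun i => e i ≠ 0) ⊆ Adag := by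
      intro i hi
      simp only [Finset.mem_filter, Finset.mem_univ, true_and] at hi
      by_contra h
      exact hi (hesupp i h)
    rw [hT]
    exact Finset.card_le_card hsub
  obtain ⟨hlowe, _⟩ := hRIP e (hecard.trans (Nat.le_succ T))
  -- energy bound
  set E := ∑ i, e i ^ 2 with hE
  have hEnn : 0 ≤ E := Finset.sum_nonneg fun i _ => sq_nonneg _
  set N := Real.sqrt E with hN
  have hNnn : 0 ≤ N := Real.sqrt_nonneg _
  have hN2 : N ^ 2 = E := Real.sq_sqrt hEnn
  set s := Real.sqrt T with hs
  have hsnn : 0 ≤ s := Real.sqrt_nonneg _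
  have hs2 : s ^ 2 = T := Real.sq_sqrt (Nat.cast_nonneg T)
  have hSe : ∑ l, (Ψ *ᵥ e) l ^ 2 = ∑ i, e i * g i := by
    rw [show ∀ f : Fin n → ℝ, ∑ l, f l ^ 2 = ∑ l, f l * f l from fun f =>
      Finset.sum_congr rfl fun l _ => sq (f _), hswap]
  have hL1 : ∑ i, e i * g i ≤ lam * ∑ i ∈ Adag, |e i| := by
    rw [← Finset.sum_subset (Finset.subset_univ Adag)
      (fun i _ hi => by rw [hesupp i hi, zero_mul]), Finset.mul_sum]
    refine Finset.sum_le_sum fun i _ => ?_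
    calc e i * g i ≤ |e i * g i| := le_abs_self _
      _ = |e i| * |g i| := abs_mul _ _
      _ ≤ |e i| * lam := mul_le_mul_of_nonneg_left (hgle i) (abs_nonneg _)
      _ = lam * |e i| := mul_comm _ _
  have hCS : ∑ i ∈ Adag, |e i| ≤ N * s := by
    have h1 : (∑ i ∈ Adag, |e i| * 1) ^ 2 ≤ (∑ i ∈ Adag, |e i| ^ 2) * ∑ i ∈ Adag, (1:ℝ) ^ 2 :=
      Finset.sum_mul_sq_le_sq_mul_sq Adag (fun i => |e i|) (fun _ => 1)
    have h2 : ∑ i ∈ Adag, |e i| ^ 2 ≤ E := by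
      rw [hE]
      refine Finset.sum_le_sum_of_subset_of_nonneg (Finset.subset_univ Adag)
        (fun i _ _ => sq_nonneg _) |>.trans_eq ?_
      exact Finset.sum_congr rfl fun i _ => sq_abs _
    have h3 : ∑ i ∈ Adag, (1:ℝ) ^ 2 = T := by simp [hT]
    have h4 : (∑ i ∈ Adag, |e i|) ^ 2 ≤ (N * s) ^ 2 := by
      calc (∑ i ∈ Adag, |e i|) ^ 2 = (∑ i ∈ Adag, |e i| * 1) ^ 2 := by simp
        _ ≤ (∑ i ∈ Adag, |e i| ^ 2) * ∑ i ∈ Adag, (1:ℝ) ^ 2 := h1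
        _ ≤ E * T := by rw [h3]; exact mul_le_mul_of_nonneg_right h2 (Nat.cast_nonneg T)
        _ = (N * s) ^ 2 := by rw [mul_pow, hN2, hs2]
    have h5 : 0 ≤ ∑ i ∈ Adag, |e i| := Finset.sum_nonneg fun i _ => abs_nonneg _
    nlinarith [sq_nonneg (∑ i ∈ Adag, |e i| - N * s), mul_nonneg hNnn hsnn]
  have hEN : (1 - δ) * N ^ 2 ≤ lam * (N * s) := by
    rw [hN2]
    calc (1 - δ) * E ≤ ∑ l, (Ψ *ᵥ e) l ^ 2 := hlowe
      _ = ∑ i, e i * g i := hSe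
      _ ≤ lam * ∑ i ∈ Adag, |e i| := hL1
      _ ≤ lam * (N * s) := mul_le_mul_of_nonneg_left hCS hlam.le
  have h3 : (1 - δ) * N ≤ lam * s := by
    rcases eq_or_lt_of_le hNnn with h | h
    · rw [← h, mul_zero]; exact mul_nonneg hlam.le hsnn
    · have := hEN
      rw [show (1-δ) * N ^2 = ((1-δ)*N)*N by ring, show lam * (N*s) = (lam*s)*N by ring] at this
      exact le_of_mul_le_mul_right this h
  -- the main contradiction
  intro i₀ hmem
  simp only [Finset.mem_filter, Finset.mem_univ, true_and] at hmem
  by_contra hi₀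
  have hx0 : x i₀ = 0 := hxI i₀ hi₀
  have hei : e i₀ = xdag i₀ := by simp [he, hx0]
  have ha : 2 * lam ≤ |e i₀| := by rw [hei]; exact hmem
  have hi₀dag : i₀ ∈ Adag := by
    rw [hAdag]
    refine Finset.mem_filter.mpr ⟨Finset.mem_univ _, fun h => ?_⟩
    rw [h] at hmem
    simp at hmem
    linarith
  have hT1 : 1 ≤ T := by
    rw [hT]
    exact Finset.card_pos.mpr ⟨i₀, hi₀dag⟩
  have hs1 : 1 ≤ s := by
    have : (1:ℝ) ≤ T := by exact_mod_cast hT1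
    nlinarith
  have hδs : δ * (4 * s + 1) ≤ 1 := by
    rw [le_div_iff₀ (by positivity)] at hAss1
    linarith [hAss1]
  -- split e at i₀
  set v : Fin p → ℝ := fun i => if i = i₀ then 0 else e i with hv
  have hv0 : v i₀ = 0 := by simp [hv]
  have hvcard : (Finset.univ.filter (fun i => v i ≠ 0)).card + 1 ≤ T + 1 := by
    have hsub : Finset.univ.filter (fun i => v i ≠ 0) ⊆
        Finset.univ.filter (fun i => e i ≠ 0) := by
      intro i hi
      simp only [Finset.mem_filter, Finset.mem_univ, true_and, hv] at hi ⊢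
      intro h
      exact hi (by simp [h])
    have := (Finset.card_le_card hsub).trans hecard
    omega
  have hvE : Real.sqrt (∑ i, v i ^ 2) ≤ N := by
    refine Real.sqrt_le_sqrt ?_
    refine Finset.sum_le_sum fun i _ => ?_
    by_cases h : i = i₀ <;> simp [hv, h, sq_nonneg]
  have hSpol := polar_aux Ψ (T+1) δ hδ0.le hRIP i₀ v hv0 hvcard
  set ind : Fin p → ℝ := fun i => if i = i₀ then (1:ℝ) else 0 with hind
  set S := ∑ l, (Ψ *ᵥ ind) l * (Ψ *ᵥ v) l with hSdef
  have hSle : |S| ≤ δ * N :=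
    hSpol.trans (mul_le_mul_of_nonneg_left hvE hδ0.le)
  have hdecomp : e = e i₀ • ind + v := by
    funext i
    by_cases h : i = i₀ <;> simp [hind, hv, h]
  have hQdef : ∀ l, (Ψ *ᵥ ind) l = Ψ l i₀ := by
    intro l
    simp [Matrix.mulVec, dotProduct, hind]
  have hg0 : g i₀ = e i₀ * (∑ l, (Ψ *ᵥ ind) l ^ 2) + S := by
    have hmve : Ψ *ᵥ e = e i₀ • (Ψ *ᵥ ind) + Ψ *ᵥ v := by
      rw [← Matrix.mulVec_smul, ← Matrix.mulVec_add, ← hdecomp]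
    have hmv : ∀ l, (Ψ *ᵥ e) l = e i₀ * (Ψ *ᵥ ind) l + (Ψ *ᵥ v) l := by
      intro l
      rw [hmve]
      simp [smul_eq_mul]
    simp only [hg]
    rw [hSdef, Finset.mul_sum, ← Finset.sum_add_distrib]
    refine Finset.sum_congr rfl fun l _ => ?_
    rw [hmv l, hQdef l]
    ring
  have hQ : 1 - δ ≤ ∑ l, (Ψ *ᵥ ind) l ^ 2 := by
    have hcard : (Finset.univ.filter (fun i => ind i ≠ 0)).card ≤ T + 1 := by
      have hsub : Finset.univ.filter (fun i => ind i ≠ 0) ⊆ {i₀} := by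
        intro i hi
        simp only [Finset.mem_filter, Finset.mem_univ, true_and, hind] at hi
        simp only [Finset.mem_singleton]
        by_contra h
        exact hi (by simp [h])
      have := (Finset.card_le_card hsub).trans (by rw [Finset.card_singleton])
      omega
    obtain ⟨hlo, _⟩ := hRIP ind hcard
    have : ∑ i, ind i ^ 2 = 1 := by simp [hind, Finset.sum_ite_eq']
    rw [this, mul_one] at hlo
    exact hlo
  have hQnn : 0 ≤ ∑ l, (Ψ *ᵥ ind) l ^ 2 := Finset.sum_nonneg fun l _ => sq_nonneg _
  have h2 : |e i₀| * (1 - δ) ≤ lam + δ * N := by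
    calc |e i₀| * (1 - δ) ≤ |e i₀| * (∑ l, (Ψ *ᵥ ind) l ^ 2) :=
        mul_le_mul_of_nonneg_left hQ (abs_nonneg _)
      _ = |e i₀ * (∑ l, (Ψ *ᵥ ind) l ^ 2)| := by rw [abs_mul, abs_of_nonneg hQnn]
      _ = |g i₀ - S| := by rw [hg0]; ring_nf
      _ ≤ |g i₀| + |S| := abs_sub _ _
      _ ≤ lam + δ * N := add_le_add (hgle i₀) hSle
  nlinarith [mul_pos hδ0 (mul_pos hlam (by linarith : (0:ℝ) < s)), mul_nonneg hδ0.le hNnn,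
    mul_nonneg (mul_nonneg hδ0.le hδ0.le) hNnn, sq_nonneg (1-δ), mul_pos hδ0 hlam]
end

section
/- (Base case of the continuation.) In the noise-free setting under Assumption 1, assume additionally that the columns of Ψ are normalized, i.e., ‖Ψ_i‖₂ = 1 for every i. Then for any index i maximizing |x†_j| over j ∈ {1,…,p}, one has |Ψ_iᵗ y| ≥ ¾|x†_i|, hence ‖Ψᵗy‖_∞ ≥ ¾‖x†‖_∞. Consequently, if λ₀ > ‖Ψᵗy‖_∞ and λ₁ = (2/3)λ₀, then J_{λ₁,3} = ∅. -/
set_option maxHeartbeats 1000000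


open Matrix

/-- Parallelogram identity for the bilinear form `⟨Ψu, Ψv⟩`. -/
lemma para_aux {n p : ℕ} (Ψ : Matrix (Fin n) (Fin p) ℝ) (u v : Fin p → ℝ) :
    ∑ k, (Ψ *ᵥ u) k * (Ψ *ᵥ v) k
      = ((∑ k, (Ψ *ᵥ (u + v)) k ^ 2) - ∑ k, (Ψ *ᵥ (u - v)) k ^ 2) / 4 := by
  rw [← Finset.sum_sub_distrib]
  have h : ∀ k, (Ψ *ᵥ (u + v)) k ^ 2 - (Ψ *ᵥ (u - v)) k ^ 2
      = 4 * ((Ψ *ᵥ u) k * (Ψ *ᵥ v) k) := by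
    intro k
    rw [Matrix.mulVec_add, Matrix.mulVec_sub]
    simp only [Pi.add_apply, Pi.sub_apply]
    ring
  simp_rw [h, ← Finset.mul_sum]
  ring

/-- base case of the continuation: with normalized columns, any index `i`
maximizing `|x†_j|` satisfies `|Ψ_iᵗ y| ≥ ¾|x†_i|`, hence `‖Ψᵗy‖_∞ ≥ ¾‖x†‖_∞`; consequently
if `λ₀ > ‖Ψᵗy‖_∞` and `λ₁ = (2/3)λ₀` then `J_{λ₁,3} = ∅`.
(The norm on `Fin p → ℝ` and `Fin n → ℝ` is the sup-norm.) -/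
theorem stmt_17 {n p : ℕ} (Ψ : Matrix (Fin n) (Fin p) ℝ)
    (xdag : Fin p → ℝ) (Adag : Finset (Fin p))
    (hAdag : Adag = Finset.univ.filter (fun i => xdag i ≠ 0))
    (T : ℕ) (hT : T = Adag.card)
    (y : Fin n → ℝ) (hy : y = Ψ *ᵥ xdag)
    (δ : ℝ) (hδ0 : 0 < δ) (hδ1 : δ < 1)
    (hRIP : HasRIP Ψ (T + 1) δ)
    (hAss1 : δ ≤ 1 / (4 * Real.sqrt T + 1))
    (hnorm : ∀ i : Fin p, ∑ k, Ψ k i ^ 2 = 1) :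
    (∀ i : Fin p, (∀ j, |xdag j| ≤ |xdag i|) → 3 / 4 * |xdag i| ≤ |(Ψᵀ *ᵥ y) i|) ∧
      3 / 4 * ‖xdag‖ ≤ ‖Ψᵀ *ᵥ y‖ ∧
      ∀ lam0 lam1 : ℝ, ‖Ψᵀ *ᵥ y‖ < lam0 → lam1 = 2 / 3 * lam0 →
        Finset.univ.filter (fun i => 3 * lam1 ≤ |xdag i|) = ∅ := by
  subst hy
  -- Core claim
  have hcore : ∀ i : Fin p, (∀ j, |xdag j| ≤ |xdag i|) →
      3 / 4 * |xdag i| ≤ |(Ψᵀ *ᵥ (Ψ *ᵥ xdag)) i| := by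
    intro i hmax
    set a := xdag i with ha
    set v : Fin p → ℝ := fun j => if j = i then 0 else xdag j with hv
    set B := ∑ k, Ψ k i * (Ψ *ᵥ v) k with hB
    -- pointwise decomposition of Ψ *ᵥ xdag
    have hdecomp : ∀ k, (Ψ *ᵥ xdag) k = a * Ψ k i + (Ψ *ᵥ v) k := by
      intro k
      simp only [Matrix.mulVec, dotProduct]
      have hptw : ∀ x, Ψ k x * xdag x = (if x = i then Ψ k x * a else 0) + Ψ k x * v x := by
        intro x
        by_cases h : x = i <;> simp [hv, h, ha]
      rw [Finset.sum_congr rfl (fun x _ => hptw x), Finset.sum_add_distrib,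
        Finset.sum_ite_eq' Finset.univ i (fun x => Ψ k x * a)]
      simp [mul_comm]
    have key : (Ψᵀ *ᵥ (Ψ *ᵥ xdag)) i = a + B := by
      have h1 : (Ψᵀ *ᵥ (Ψ *ᵥ xdag)) i = ∑ k, Ψ k i * (Ψ *ᵥ xdag) k := by
        simp [Matrix.mulVec, dotProduct, Matrix.transpose_apply]
      rw [h1]
      calc ∑ k, Ψ k i * (Ψ *ᵥ xdag) k
          = ∑ k, (a * Ψ k i ^ 2 + Ψ k i * (Ψ *ᵥ v) k) := by
            refine Finset.sum_congr rfl fun k _ => ?_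
            rw [hdecomp k]; ring
        _ = a * ∑ k, Ψ k i ^ 2 + B := by
            rw [Finset.sum_add_distrib, Finset.mul_sum]
        _ = a + B := by rw [hnorm i, mul_one]
    have hS0 : (0:ℝ) ≤ ∑ j, v j ^ 2 := Finset.sum_nonneg fun j _ => sq_nonneg _
    set S := ∑ j, v j ^ 2 with hSdef
    by_cases hS : S = 0
    · -- then v = 0, B = 0
      have hvz : ∀ j, v j = 0 := by
        intro j
        have := (Finset.sum_eq_zero_iff_of_nonneg (fun j _ => sq_nonneg (v j))).mp hS
        exact (pow_eq_zero_iff two_ne_zero).mp (this j (Finset.mem_univ j))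
      have hB0 : B = 0 := by
        apply Finset.sum_eq_zero
        intro k _
        have : (Ψ *ᵥ v) k = 0 := by
          simp only [Matrix.mulVec, dotProduct]
          exact Finset.sum_eq_zero fun j _ => by rw [hvz j, mul_zero]
        rw [this, mul_zero]
      rw [key, hB0, add_zero]
      nlinarith [abs_nonneg a]
    · have hSpos : 0 < S := lt_of_le_of_ne hS0 (Ne.symm hS)
      set s := Real.sqrt S with hsdef
      have hspos : 0 < s := Real.sqrt_pos.mpr hSpos
      have hs2 : s ^ 2 = S := Real.sq_sqrt hS0
      set u : Fin p → ℝ := fun j => if j = i then s else 0 with hu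
      have hΨu : ∀ k, (Ψ *ᵥ u) k = s * Ψ k i := by
        intro k
        simp only [Matrix.mulVec, dotProduct, hu, mul_ite, mul_zero]
        rw [Finset.sum_ite_eq' Finset.univ i (fun j => Ψ k j * s)]
        simp [mul_comm]
      -- sums of squares
      have huv : ∀ j, u j * v j = 0 := by
        intro j
        by_cases h : j = i <;> simp [hu, hv, h]
      have hu2 : ∑ j, u j ^ 2 = S := by
        have hptw : ∀ j, u j ^ 2 = if j = i then s ^ 2 else 0 := by
          intro j
          by_cases h : j = i <;> simp [hu, h]
        simp_rw [hptw]
        rw [Finset.sum_ite_eq' Finset.univ i (fun _ => s ^ 2)]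
        simp [hs2]
      have hsq_add : ∑ j, (u + v) j ^ 2 = 2 * S := by
        have : ∀ j, (u + v) j ^ 2 = u j ^ 2 + v j ^ 2 := by
          intro j
          have := huv j
          simp only [Pi.add_apply]
          nlinarith [huv j]
        simp_rw [this]
        rw [Finset.sum_add_distrib, hu2, ← hSdef]; ring
      have hsq_sub : ∑ j, (u - v) j ^ 2 = 2 * S := by
        have : ∀ j, (u - v) j ^ 2 = u j ^ 2 + v j ^ 2 := by
          intro j
          simp only [Pi.sub_apply]
          nlinarith [huv j]
        simp_rw [this]
        rw [Finset.sum_add_distrib, hu2, ← hSdef]; ring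
      -- support bounds
      have hsupp : ∀ w : Fin p → ℝ, (∀ j, w j ≠ 0 → j = i ∨ xdag j ≠ 0) →
          (Finset.univ.filter (fun j => w j ≠ 0)).card ≤ T + 1 := by
        intro w hw
        have hsub : Finset.univ.filter (fun j => w j ≠ 0) ⊆ insert i Adag := by
          intro j hj
          rw [Finset.mem_filter] at hj
          rcases hw j hj.2 with h | h
          · exact Finset.mem_insert.mpr (Or.inl h)
          · exact Finset.mem_insert.mpr (Or.inr (by rw [hAdag]; simp [h]))
        calc (Finset.univ.filter (fun j => w j ≠ 0)).card
            ≤ (insert i Adag).card := Finset.card_le_card hsub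
          _ ≤ Adag.card + 1 := Finset.card_insert_le _ _
          _ = T + 1 := by rw [hT]
      have hc1 : (Finset.univ.filter (fun j => (u + v) j ≠ 0)).card ≤ T + 1 := by
        apply hsupp
        intro j hj
        by_cases h : j = i
        · exact Or.inl h
        · right
          simp only [Pi.add_apply, hu, hv, if_neg h, zero_add] at hj
          exact hj
      have hc2 : (Finset.univ.filter (fun j => (u - v) j ≠ 0)).card ≤ T + 1 := by
        apply hsupp
        intro j hj
        by_cases h : j = i
        · exact Or.inl h
        · right
          simp only [Pi.sub_apply, hu, hv, if_neg h, zero_sub, neg_ne_zero] at hj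
          exact hj
      have h1 := hRIP (u + v) hc1
      have h2 := hRIP (u - v) hc2
      rw [hsq_add] at h1
      rw [hsq_sub] at h2
      have hpara := para_aux Ψ u v
      have hfac : ∑ k, (Ψ *ᵥ u) k * (Ψ *ᵥ v) k = s * B := by
        simp_rw [hΨu]
        rw [hB, Finset.mul_sum]
        refine Finset.sum_congr rfl fun k _ => by ring
      have habs : |s * B| ≤ δ * S := by
        rw [← hfac, abs_le]
        constructor
        · rw [hpara]; linarith [h1.1, h2.2]
        · rw [hpara]; linarith [h1.2, h2.1]
      have hBle : |B| ≤ δ * s := by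
        have h3 : s * |B| ≤ s * (δ * s) := by
          have habs2 : s * |B| ≤ δ * S := by
            rw [← abs_of_pos hspos, ← abs_mul]; exact habs
          nlinarith [hs2]
        exact le_of_mul_le_mul_left h3 hspos
      -- S ≤ T * a ^ 2
      have hST : S ≤ T * a ^ 2 := by
        have hzero : ∀ j ∈ Finset.univ, j ∉ Adag.erase i → v j ^ 2 = 0 := by
          intro j _ hj
          rw [Finset.mem_erase] at hj
          push_neg at hj
          by_cases h : j = i
          · simp [hv, h]
          · have : j ∉ Adag := hj h
            rw [hAdag] at this
            simp only [Finset.mem_filter, Finset.mem_univ, true_and, not_not] at this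
            simp [hv, h, this]
        have heq : ∑ j ∈ Adag.erase i, v j ^ 2 = S := by
          rw [hSdef]
          exact Finset.sum_subset (Finset.subset_univ _) hzero
        have hle : ∑ j ∈ Adag.erase i, v j ^ 2 ≤ ∑ _j ∈ Adag.erase i, a ^ 2 := by
          refine Finset.sum_le_sum fun j _ => ?_
          have hvle : |v j| ≤ |a| := by
            by_cases h : j = i
            · simp [hv, h, abs_nonneg]
            · simp only [hv, if_neg h]; exact hmax j
          calc v j ^ 2 = |v j| ^ 2 := (sq_abs _).symm
            _ ≤ |a| ^ 2 := by nlinarith [abs_nonneg (v j)]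
            _ = a ^ 2 := sq_abs a
        rw [Finset.sum_const, nsmul_eq_mul] at hle
        have hcard : ((Adag.erase i).card : ℝ) ≤ T := by
          rw [hT]
          exact_mod_cast Finset.card_erase_le
        calc S = ∑ j ∈ Adag.erase i, v j ^ 2 := heq.symm
          _ ≤ ((Adag.erase i).card : ℝ) * a ^ 2 := hle
          _ ≤ T * a ^ 2 := mul_le_mul_of_nonneg_right hcard (sq_nonneg a)
      have hsa : s ≤ Real.sqrt T * |a| := by
        calc s = Real.sqrt S := rfl
          _ ≤ Real.sqrt ((T : ℝ) * a ^ 2) := Real.sqrt_le_sqrt hST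
          _ = Real.sqrt T * |a| := by
              rw [Real.sqrt_mul (Nat.cast_nonneg T), Real.sqrt_sq_eq_abs]
      have hδT : δ * Real.sqrt T ≤ 1 / 4 := by
        have h4 : (0:ℝ) < 4 * Real.sqrt T + 1 := by positivity
        have := (le_div_iff₀ h4).mp hAss1
        nlinarith [Real.sqrt_nonneg (T : ℝ)]
      have hBfinal : |B| ≤ 1 / 4 * |a| := by
        calc |B| ≤ δ * s := hBle
          _ ≤ δ * (Real.sqrt T * |a|) := by
              exact mul_le_mul_of_nonneg_left hsa hδ0.le
          _ = (δ * Real.sqrt T) * |a| := by ring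
          _ ≤ 1 / 4 * |a| := mul_le_mul_of_nonneg_right hδT (abs_nonneg a)
      rw [key]
      have htri : |a| - |B| ≤ |a + B| := by
        have h5 := abs_add_le (a + B) (-B)
        simp only [add_neg_cancel_right, abs_neg] at h5
        linarith
      linarith
  refine ⟨hcore, ?_, ?_⟩
  · -- sup-norm statement
    rcases isEmpty_or_nonempty (Fin p) with hp | hp
    · have : xdag = 0 := Subsingleton.elim _ _
      rw [this]
      simp [norm_nonneg]
    · obtain ⟨i, -, hi⟩ := Finset.exists_max_image Finset.univ (fun j => |xdag j|)
        ⟨Classical.arbitrary (Fin p), Finset.mem_univ _⟩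
      have hmax : ∀ j, |xdag j| ≤ |xdag i| := fun j => hi j (Finset.mem_univ j)
      have h1 := hcore i hmax
      have h2 : |(Ψᵀ *ᵥ (Ψ *ᵥ xdag)) i| ≤ ‖Ψᵀ *ᵥ (Ψ *ᵥ xdag)‖ := by
        have := norm_le_pi_norm (Ψᵀ *ᵥ (Ψ *ᵥ xdag)) i
        rwa [Real.norm_eq_abs] at this
      have h3 : ‖xdag‖ ≤ |xdag i| := by
        rw [pi_norm_le_iff_of_nonneg (abs_nonneg _)]
        intro j
        rw [Real.norm_eq_abs]
        exact hmax j
      linarith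
  · intro lam0 lam1 h0 h1
    rw [Finset.filter_eq_empty_iff]
    intro j _
    push_neg
    have hj : |xdag j| ≤ ‖xdag‖ := by
      have := norm_le_pi_norm xdag j
      rwa [Real.norm_eq_abs] at this
    have h2 : 3 / 4 * ‖xdag‖ ≤ ‖Ψᵀ *ᵥ (Ψ *ᵥ xdag)‖ := by
      rcases isEmpty_or_nonempty (Fin p) with hp | hp
      · have : xdag = 0 := Subsingleton.elim _ _
        rw [this]; simp [norm_nonneg]
      · obtain ⟨i, -, hi⟩ := Finset.exists_max_image Finset.univ (fun j => |xdag j|)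
          ⟨Classical.arbitrary (Fin p), Finset.mem_univ _⟩
        have hmax : ∀ k, |xdag k| ≤ |xdag i| := fun k => hi k (Finset.mem_univ k)
        have ha := hcore i hmax
        have hb : |(Ψᵀ *ᵥ (Ψ *ᵥ xdag)) i| ≤ ‖Ψᵀ *ᵥ (Ψ *ᵥ xdag)‖ := by
          have := norm_le_pi_norm (Ψᵀ *ᵥ (Ψ *ᵥ xdag)) i
          rwa [Real.norm_eq_abs] at this
        have hc : ‖xdag‖ ≤ |xdag i| := by
          rw [pi_norm_le_iff_of_nonneg (abs_nonneg _)]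
          intro k
          rw [Real.norm_eq_abs]
          exact hmax k
        linarith
    have h4 : (0:ℝ) ≤ ‖Ψᵀ *ᵥ (Ψ *ᵥ xdag)‖ := norm_nonneg _
    rw [h1]
    linarith
end

section
/- (Error bound at the true support.) In the noise-free setting, suppose Ψ satisfies RIP of order T with constant δ_T < 1, let d ∈ ℝ^p have |d_i| = λ for all i ∈ A†, and let x ∈ ℝ^p be given by x_i = 0 for i ∉ A† and x_{A†} = (Ψ_{A†}ᵗΨ_{A†})⁻¹(Ψ_{A†}ᵗ y − d_{A†}). Then x†_{A†} − x_{A†} = (Ψ_{A†}ᵗΨ_{A†})⁻¹ d_{A†}, and consequently ‖x† − x‖₂ ≤ √T · λ/(1 − δ_T). -/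
open Matrix

/-- Extension of a vector on a subset by zero. -/
def extZero {p : ℕ} (A : Finset (Fin p)) (v : {i // i ∈ A} → ℝ) : Fin p → ℝ :=
  fun i => if h : i ∈ A then v ⟨i, h⟩ else 0

lemma mulVec_extZero {n p : ℕ} (Ψ : Matrix (Fin n) (Fin p) ℝ) (A : Finset (Fin p))
    (v : {i // i ∈ A} → ℝ) : Ψ *ᵥ extZero A v = colSub Ψ A *ᵥ v := by
  funext j
  simp only [Matrix.mulVec, dotProduct, colSub, Matrix.of_apply, extZero]
  rw [← Finset.sum_subset (Finset.subset_univ A) (by intro i _ hi; simp [hi]),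
    ← Finset.sum_coe_sort A (f := fun i => Ψ j i * (if h : i ∈ A then v ⟨i, h⟩ else 0))]
  apply Finset.sum_congr rfl
  intro i hi
  simp [Subtype.coe_prop]

lemma sumsq_extZero {p : ℕ} (A : Finset (Fin p)) (v : {i // i ∈ A} → ℝ) :
    ∑ i, extZero A v i ^ 2 = ∑ i, v i ^ 2 := by
  rw [← Finset.sum_subset (Finset.subset_univ A) (by intro i _ hi; simp [extZero, hi]),
    ← Finset.sum_coe_sort A (f := fun i => extZero A v i ^ 2)]
  apply Finset.sum_congr rfl
  intro i _
  simp [extZero, Subtype.coe_prop]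

lemma card_support_extZero {p : ℕ} (A : Finset (Fin p)) (v : {i // i ∈ A} → ℝ) :
    (Finset.univ.filter (fun i => extZero A v i ≠ 0)).card ≤ A.card := by
  apply Finset.card_le_card
  intro i hi
  simp only [Finset.mem_filter, Finset.mem_univ, true_and] at hi
  by_contra h
  exact hi (by simp [extZero, h])

/-- error bound at the true support: in the noise-free setting, with RIP of
order `T` and constant `δ_T < 1`, `|d_i| = λ` on `A†`, and `x` supported on `A†` with
`x_{A†} = (Ψ_{A†}ᵗΨ_{A†})⁻¹(Ψ_{A†}ᵗ y − d_{A†})`, one has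
`x†_{A†} − x_{A†} = (Ψ_{A†}ᵗΨ_{A†})⁻¹ d_{A†}` and `‖x† − x‖₂ ≤ √T·λ/(1 − δ_T)`. -/
theorem stmt_18 {n p : ℕ} (Ψ : Matrix (Fin n) (Fin p) ℝ)
    (xdag : Fin p → ℝ) (Adag : Finset (Fin p))
    (hAdag : Adag = Finset.univ.filter (fun i => xdag i ≠ 0))
    (T : ℕ) (hT : T = Adag.card)
    (y : Fin n → ℝ) (hy : y = Ψ *ᵥ xdag)
    (δT : ℝ) (hδ0 : 0 < δT) (hδ1 : δT < 1)
    (hRIP : HasRIP Ψ T δT)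
    (lam : ℝ) (hlam : 0 < lam)
    (d x : Fin p → ℝ)
    (hdA : ∀ i ∈ Adag, |d i| = lam)
    (hxI : ∀ i ∉ Adag, x i = 0)
    (hxA : (fun j : {i // i ∈ Adag} => x j.1) =
      ((colSub Ψ Adag)ᵀ * colSub Ψ Adag)⁻¹ *ᵥ
        ((colSub Ψ Adag)ᵀ *ᵥ y - fun j => d j.1)) :
    ((fun j : {i // i ∈ Adag} => xdag j.1 - x j.1) =
      ((colSub Ψ Adag)ᵀ * colSub Ψ Adag)⁻¹ *ᵥ fun j => d j.1) ∧
    Real.sqrt (∑ i, (xdag i - x i) ^ 2) ≤ Real.sqrt T * lam / (1 - δT) := by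
  set B := colSub Ψ Adag with hB
  set G := Bᵀ * B with hG
  have hxdagI : ∀ i ∉ Adag, xdag i = 0 := by
    intro i hi
    rw [hAdag] at hi
    simpa using hi
  -- quadratic form of G equals the sum of squares of B *ᵥ v
  have hquad : ∀ v : {i // i ∈ Adag} → ℝ,
      v ⬝ᵥ (G *ᵥ v) = ∑ j, (B *ᵥ v) j ^ 2 := by
    intro v
    rw [hG, ← Matrix.mulVec_mulVec, Matrix.dotProduct_mulVec, Matrix.vecMul_transpose]
    simp [dotProduct, sq]
  -- coercivity from RIP
  have hcoer : ∀ v : {i // i ∈ Adag} → ℝ,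
      (1 - δT) * (∑ i, v i ^ 2) ≤ v ⬝ᵥ (G *ᵥ v) := by
    intro v
    have h := (hRIP (extZero Adag v) (by rw [hT]; exact card_support_extZero _ _)).1
    rw [sumsq_extZero, mulVec_extZero] at h
    rw [hquad]
    exact h
  -- G is positive definite, hence invertible
  have hPD : G.PosDef := by
    rw [Matrix.posDef_iff_dotProduct_mulVec]
    constructor
    · rw [Matrix.IsHermitian, Matrix.conjTranspose_eq_transpose_of_trivial, hG,
        Matrix.transpose_mul, Matrix.transpose_transpose]
    · intro v hv
      have h1 := hcoer v
      have h2 : 0 < ∑ i, v i ^ 2 := by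
        obtain ⟨i, hi⟩ := Function.ne_iff.mp hv
        apply Finset.sum_pos' (fun j _ => sq_nonneg _)
        exact ⟨i, Finset.mem_univ i, pow_two_pos_of_ne_zero hi⟩
      have : 0 < (1 - δT) * (∑ i, v i ^ 2) := mul_pos (by linarith) h2
      simpa [dotProduct] using lt_of_lt_of_le this h1
  have hGunit : IsUnit G.det := hPD.det_pos.ne'.isUnit
  have hGinv : G⁻¹ * G = 1 := Matrix.nonsing_inv_mul G hGunit
  have hGinv' : G * G⁻¹ = 1 := Matrix.mul_nonsing_inv G hGunit
  -- Ψ *ᵥ xdag = B *ᵥ xdag_A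
  have hext : extZero Adag (fun j => xdag j.1) = xdag := by
    funext i
    by_cases hi : i ∈ Adag
    · simp [extZero, hi]
    · simp [extZero, hi, hxdagI i hi]
  have hPsix : Ψ *ᵥ xdag = B *ᵥ (fun j : {i // i ∈ Adag} => xdag j.1) := by
    conv_lhs => rw [← hext]
    rw [mulVec_extZero, ← hB]
  have hBty : Bᵀ *ᵥ y = G *ᵥ (fun j : {i // i ∈ Adag} => xdag j.1) := by
    rw [hy, hPsix, Matrix.mulVec_mulVec, ← hG]
  -- Part 1
  have part1 : (fun j : {i // i ∈ Adag} => xdag j.1 - x j.1) =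
      G⁻¹ *ᵥ fun j => d j.1 := by
    funext j
    have := congrFun hxA j
    rw [this, hBty]
    have : G⁻¹ *ᵥ (G *ᵥ (fun j : {i // i ∈ Adag} => xdag j.1) - fun j => d j.1)
        = (fun j : {i // i ∈ Adag} => xdag j.1) - G⁻¹ *ᵥ (fun j => d j.1) := by
      rw [Matrix.mulVec_sub, Matrix.mulVec_mulVec, hGinv, Matrix.one_mulVec]
    rw [this]
    simp
  refine ⟨part1, ?_⟩
  -- Part 2
  set u : {i // i ∈ Adag} → ℝ := fun j => xdag j.1 - x j.1 with hu
  have hGu : G *ᵥ u = fun j => d j.1 := by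
    rw [part1, Matrix.mulVec_mulVec, hGinv', Matrix.one_mulVec]
  have hsum : ∑ i, (xdag i - x i) ^ 2 = ∑ i, u i ^ 2 := by
    have : extZero Adag u = fun i => xdag i - x i := by
      funext i
      by_cases hi : i ∈ Adag
      · simp [extZero, hi, hu]
      · simp [extZero, hi, hxdagI i hi, hxI i hi]
    rw [← sumsq_extZero Adag u, this]
  set S := Real.sqrt (∑ i, u i ^ 2) with hS
  have hSnn : 0 ≤ S := Real.sqrt_nonneg _
  have hSsq : S ^ 2 = ∑ i, u i ^ 2 := Real.sq_sqrt (Finset.sum_nonneg fun i _ => sq_nonneg _)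
  have hdsq : ∑ j : {i // i ∈ Adag}, (d j.1) ^ 2 = T * lam ^ 2 := by
    have : ∀ j : {i // i ∈ Adag}, (d j.1) ^ 2 = lam ^ 2 := by
      intro j
      rw [← sq_abs, hdA j.1 j.2]
    rw [Finset.sum_congr rfl (fun j _ => this j), Finset.sum_const, nsmul_eq_mul]
    congr 1
    rw [hT]
    simp [Fintype.card_coe]
  -- Cauchy-Schwarz: u ⬝ᵥ d_A ≤ S * √(T λ²)
  have hCS : u ⬝ᵥ (fun j : {i // i ∈ Adag} => d j.1) ≤ S * (Real.sqrt T * lam) := by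
    have h := Finset.sum_mul_sq_le_sq_mul_sq Finset.univ u (fun j : {i // i ∈ Adag} => d j.1)
    have h2 : (∑ j : {i // i ∈ Adag}, u j * d j.1) ^ 2 ≤ (S * (Real.sqrt T * lam)) ^ 2 := by
      calc (∑ j : {i // i ∈ Adag}, u j * d j.1) ^ 2
          ≤ (∑ j, u j ^ 2) * ∑ j : {i // i ∈ Adag}, (d j.1) ^ 2 := h
        _ = S ^ 2 * (T * lam ^ 2) := by rw [hSsq, hdsq]
        _ = (S * (Real.sqrt T * lam)) ^ 2 := by
            rw [mul_pow, mul_pow, Real.sq_sqrt (Nat.cast_nonneg T)]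
    have hrhs : 0 ≤ S * (Real.sqrt T * lam) := by positivity
    have habs : (∑ j : {i // i ∈ Adag}, u j * d j.1) ≤ S * (Real.sqrt T * lam) := by
      nlinarith [h2, hrhs]
    exact habs
  have key : (1 - δT) * S ^ 2 ≤ S * (Real.sqrt T * lam) := by
    calc (1 - δT) * S ^ 2 = (1 - δT) * ∑ i, u i ^ 2 := by rw [hSsq]
      _ ≤ u ⬝ᵥ (G *ᵥ u) := hcoer u
      _ = u ⬝ᵥ (fun j : {i // i ∈ Adag} => d j.1) := by rw [hGu]
      _ ≤ S * (Real.sqrt T * lam) := hCS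
  have hδpos : 0 < 1 - δT := by linarith
  have hgoal : S ≤ Real.sqrt T * lam / (1 - δT) := by
    rcases eq_or_lt_of_le hSnn with h0 | h0
    · rw [← h0]; positivity
    · rw [le_div_iff₀ hδpos]
      have : (1 - δT) * S * S ≤ (Real.sqrt T * lam) * S := by
        calc (1 - δT) * S * S = (1 - δT) * S ^ 2 := by ring
          _ ≤ S * (Real.sqrt T * lam) := key
          _ = (Real.sqrt T * lam) * S := by ring
      calc S * (1 - δT) = (1 - δT) * S := by ring
        _ ≤ Real.sqrt T * lam := by
            have := mul_le_mul_iff_of_pos_right h0 |>.mp this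
            linarith
  rw [hsum]
  exact hgoal
end
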